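/- For every n ≥ 1 and every pair of partitions σ, τ of n with ρ(σ,τ) = 1, writing b = s(σ,τ) and c = m(σ,τ), there exists a coupling (X₁, Y₁) of one step of the split-merge chain from σ and one step from τ such that almost surely ρ(X₁, Y₁) ≤ 1, ℙ(X₁ = Y₁) ≥ 4b/n², and for all reals x, y, R with 0 < x ≤ c and |V(σ, y)| ≥ R, ℙ( m(X₁, Y₁) ≥ x + y ) ≥ 2c(R − 2c)/n². -/

import Mathlib

noncomputable section
open scoped BigOperators Classical

/-- Total variation distance between two functions (distributions) on a finite set. -/
def tvDist {Ω : Type*} [Fintype Ω] (μ ν : Ω → ℝ) : ℝ := (∑ x, |μ x - ν x|) / 2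

/-- Transition matrix of the random transposition walk on `S_n`. -/
def rtMatrix (n : ℕ) : Matrix (Equiv.Perm (Fin n)) (Equiv.Perm (Fin n)) ℝ :=
  fun σ α =>
    ((Finset.univ.filter (fun ij : Fin n × Fin n => σ * Equiv.swap ij.1 ij.2 = α)).card : ℝ)
      / (n : ℝ) ^ 2

/-- Uniform (stationary) distribution on `S_n`. -/
def rtPi (n : ℕ) : Equiv.Perm (Fin n) → ℝ := fun _ => ((n.factorial : ℝ))⁻¹

/-- Cycle type of a permutation, as a partition of `n`. -/
def cyc (n : ℕ) (α : Equiv.Perm (Fin n)) : Nat.Partition n :=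
  cast (congrArg Nat.Partition (Fintype.card_fin n)) α.partition

/-- Transition probabilities of the split-merge chain on partitions of `n`. -/
def smKernel (n : ℕ) (p q : Nat.Partition n) : ℝ :=
  (if q = p then (1 : ℝ) / n else 0)
  + (p.parts.map (fun a =>
      ∑ r ∈ Finset.Ico 1 a,
        if q.parts = r ::ₘ (a - r) ::ₘ p.parts.erase a then (a : ℝ) / (n : ℝ) ^ 2 else 0)).sum
  + (p.parts.map (fun a =>
      ((p.parts.erase a).map (fun b =>
        if q.parts = (a + b) ::ₘ ((p.parts.erase a).erase b) then
          (a : ℝ) * (b : ℝ) / (n : ℝ) ^ 2 else 0)).sum)).sum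

/-- Transition matrix of the split-merge chain. -/
def smMatrix (n : ℕ) : Matrix (Nat.Partition n) (Nat.Partition n) ℝ := fun p q => smKernel n p q

/-- Stationary distribution of the split-merge chain: `π(σ) = |Perm(σ)|/n!`. -/
def smPi (n : ℕ) : Nat.Partition n → ℝ := fun σ =>
  ((Finset.univ.filter (fun α : Equiv.Perm (Fin n) => cyc n α = σ)).card : ℝ) / (n.factorial : ℝ)

/-- `p` is obtained from `q` by splitting one part into two. -/
def IsSplitOf (n : ℕ) (p q : Nat.Partition n) : Prop :=
  ∃ a ∈ q.parts, ∃ r : ℕ, 1 ≤ r ∧ r < a ∧ p.parts = r ::ₘ (a - r) ::ₘ q.parts.erase a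

/-- Adjacency graph of single split/merge moves on partitions of `n`. -/
def smGraph (n : ℕ) : SimpleGraph (Nat.Partition n) where
  Adj p q := p ≠ q ∧ (IsSplitOf n p q ∨ IsSplitOf n q p)
  symm := ⟨fun p q h => ⟨h.1.symm, h.2.symm⟩⟩
  loopless := ⟨fun p h => h.1 rfl⟩

/-- The split-merge graph distance `ρ` on partitions of `n`. -/
def rho (n : ℕ) (p q : Nat.Partition n) : ℕ := (smGraph n).dist p q

/-- The multiset of parts on which two partitions differ. -/
def diffParts {n : ℕ} (σ τ : Nat.Partition n) : Multiset ℕ :=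
  (σ.parts - τ.parts) + (τ.parts - σ.parts)

/-- `s(σ,τ)`: the smallest part in which adjacent `σ` and `τ` differ; `s(σ,σ) = n/2`. -/
def sPart (n : ℕ) (σ τ : Nat.Partition n) : ℝ :=
  if σ = τ then (n : ℝ) / 2 else ((((diffParts σ τ).sort (· ≤ ·)).headI : ℕ) : ℝ)

/-- `m(σ,τ)`: the medium part in which adjacent `σ` and `τ` differ; `m(σ,σ) = n`. -/
def mPart (n : ℕ) (σ τ : Nat.Partition n) : ℝ :=
  if σ = τ then (n : ℝ) else (((((diffParts σ τ).sort (· ≤ ·)).tail).headI : ℕ) : ℝ)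

/-- `|V(σ,x)|`: the sum of the parts of `σ` of size at least `x`. -/
def Vsum {n : ℕ} (σ : Nat.Partition n) (x : ℝ) : ℝ :=
  (((Multiset.filter (fun a : ℕ => x ≤ (a : ℝ)) σ.parts).sum : ℕ) : ℝ)

/-- A coupling of two split-merge chains started at `(σ, τ)`, given by the probabilities
`P t h` of each finite trajectory `h` of states at times `0, …, t`. -/
def IsSMCoupling (n : ℕ) (σ τ : Nat.Partition n)
    (P : (t : ℕ) → (Fin (t + 1) → Nat.Partition n × Nat.Partition n) → ℝ) : Prop :=
  (∀ t h, 0 ≤ P t h) ∧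
  (P 0 (fun _ => (σ, τ)) = 1) ∧
  (∀ (t : ℕ) (h : Fin (t + 1) → Nat.Partition n × Nat.Partition n),
      P t h = ∑ z : Nat.Partition n × Nat.Partition n, P (t + 1) (Fin.snoc h z)) ∧
  (∀ (t : ℕ) (h : Fin (t + 1) → Nat.Partition n × Nat.Partition n) (a : Nat.Partition n),
      ∑ b : Nat.Partition n, P (t + 1) (Fin.snoc h (a, b))
        = smKernel n (h (Fin.last t)).1 a * P t h) ∧
  (∀ (t : ℕ) (h : Fin (t + 1) → Nat.Partition n × Nat.Partition n) (b : Nat.Partition n),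
      ∑ a : Nat.Partition n, P (t + 1) (Fin.snoc h (a, b))
        = smKernel n (h (Fin.last t)).2 b * P t h)

/-- The coupling is coalescent: once the two coordinates meet they stay together. -/
def IsCoalescent (n : ℕ)
    (P : (t : ℕ) → (Fin (t + 1) → Nat.Partition n × Nat.Partition n) → ℝ) : Prop :=
  ∀ (t : ℕ) (h : Fin (t + 1) → Nat.Partition n × Nat.Partition n), P t h ≠ 0 →
    ∀ i j : Fin (t + 1), i ≤ j → (h i).1 = (h i).2 → (h j).1 = (h j).2

/-- Along the coupling, `ρ(X_t, Y_t) ≤ 1` almost surely. -/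
def StaysClose (n : ℕ)
    (P : (t : ℕ) → (Fin (t + 1) → Nat.Partition n × Nat.Partition n) → ℝ) : Prop :=
  ∀ (t : ℕ) (h : Fin (t + 1) → Nat.Partition n × Nat.Partition n), P t h ≠ 0 →
    ∀ i : Fin (t + 1), rho n (h i).1 (h i).2 ≤ 1

/-- On the event `X_t ≠ Y_t`, the conditional probability of meeting at time `t+1`
is at least `4 s(X_t,Y_t)/n²`. -/
def MeetLowerBound (n : ℕ)
    (P : (t : ℕ) → (Fin (t + 1) → Nat.Partition n × Nat.Partition n) → ℝ) : Prop :=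
  ∀ (t : ℕ) (h : Fin (t + 1) → Nat.Partition n × Nat.Partition n),
    (h (Fin.last t)).1 ≠ (h (Fin.last t)).2 →
      4 * sPart n (h (Fin.last t)).1 (h (Fin.last t)).2 / (n : ℝ) ^ 2 * P t h ≤
        ∑ z : Nat.Partition n, P (t + 1) (Fin.snoc h (z, z))

/-- Probability that the pair of chains at time `t` satisfies `E`. -/
def probAt (n : ℕ)
    (P : (t : ℕ) → (Fin (t + 1) → Nat.Partition n × Nat.Partition n) → ℝ) (t : ℕ)
    (E : Nat.Partition n × Nat.Partition n → Prop) : ℝ :=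
  ∑ h : Fin (t + 1) → Nat.Partition n × Nat.Partition n,
    if E (h (Fin.last t)) then P t h else 0

/-- Expectation of `g(X_t, Y_t)`. -/
def expAt (n : ℕ)
    (P : (t : ℕ) → (Fin (t + 1) → Nat.Partition n × Nat.Partition n) → ℝ) (t : ℕ)
    (g : Nat.Partition n × Nat.Partition n → ℝ) : ℝ :=
  ∑ h : Fin (t + 1) → Nat.Partition n × Nat.Partition n, P t h * g (h (Fin.last t))

/-- A coupling of one step of the split-merge chain from `σ` and from `τ`. -/
def IsOneStepCoupling (n : ℕ) (σ τ : Nat.Partition n)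
    (μ : Nat.Partition n × Nat.Partition n → ℝ) : Prop :=
  (∀ z, 0 ≤ μ z) ∧ (∀ p, ∑ q, μ (p, q) = smKernel n σ p) ∧
    (∀ q, ∑ p, μ (p, q) = smKernel n τ q)

/-- Length of the cycle of `α` containing `v`. -/
def cycLen {n : ℕ} (α : Equiv.Perm (Fin n)) (v : Fin n) : ℕ :=
  Function.minimalPeriod ⇑α v

namespace SMAux

lemma erase_cons_cons (u v : ℕ) (s : Multiset ℕ) : (u ::ₘ v ::ₘ s).erase v = u ::ₘ s := by
  by_cases h : u = v
  · subst h; rw [Multiset.erase_cons_head]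
  · rw [Multiset.erase_cons_tail _ h, Multiset.erase_cons_head]

lemma erase_cons_of_mem {a : ℕ} (u : ℕ) {s : Multiset ℕ} (h : a ∈ s) :
    (u ::ₘ s).erase a = u ::ₘ s.erase a := by
  by_cases h' : u = a
  · subst h'; rw [Multiset.erase_cons_head, Multiset.cons_erase h]
  · rw [Multiset.erase_cons_tail _ h']

lemma erase_cons_cons_of_mem {a : ℕ} (u v : ℕ) {s : Multiset ℕ} (h : a ∈ s) :
    (u ::ₘ v ::ₘ s).erase a = u ::ₘ v ::ₘ s.erase a := by
  rw [erase_cons_of_mem u (Multiset.mem_cons_of_mem h), erase_cons_of_mem v h]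

lemma erase_cons_cons_cons (u v w : ℕ) (s : Multiset ℕ) :
    (u ::ₘ v ::ₘ w ::ₘ s).erase w = u ::ₘ v ::ₘ s := by
  have h1 : (u ::ₘ v ::ₘ w ::ₘ s) = v ::ₘ w ::ₘ u ::ₘ s := by
    rw [Multiset.cons_swap u v, Multiset.cons_swap u w]
  rw [h1, erase_cons_cons, Multiset.cons_swap]

/-- Partitions with the same parts are equal. -/
lemma partition_eq {n : ℕ} {p q : Nat.Partition n} (h : p.parts = q.parts) : p = q :=
  Nat.Partition.ext h

lemma partition_ne_of_card {n : ℕ} {p q : Nat.Partition n}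
    (h : Multiset.card p.parts ≠ Multiset.card q.parts) : p ≠ q := by
  intro he; exact h (by rw [he])

/-- `M` is realizable as the parts of a partition of `n`. -/
def Good (n : ℕ) (M : Multiset ℕ) : Prop := (∀ i ∈ M, 0 < i) ∧ M.sum = n

lemma Good.exists {n : ℕ} {M : Multiset ℕ} (h : Good n M) :
    ∃ p : Nat.Partition n, p.parts = M :=
  ⟨⟨M, h.1 _, h.2⟩, rfl⟩

/-- Indicator point mass at the pair of partitions with parts `(M, N)`. -/
def pt (n : ℕ) (M N : Multiset ℕ) (z : Nat.Partition n × Nat.Partition n) : ℝ :=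
  if z.1.parts = M ∧ z.2.parts = N then 1 else 0

lemma pt_nonneg {n : ℕ} (M N : Multiset ℕ) (z) : 0 ≤ pt n M N z := by
  unfold pt; split <;> norm_num

lemma sum_if_parts {n : ℕ} {N : Multiset ℕ} (h : Good n N) (x : ℝ) :
    (∑ q : Nat.Partition n, if q.parts = N then x else 0) = x := by
  obtain ⟨q₀, hq₀⟩ := h.exists
  have he : ∀ q : Nat.Partition n, q.parts = N ↔ q = q₀ := by
    intro q; constructor
    · intro h'; exact partition_eq (by rw [h', hq₀])
    · intro h'; rw [h', hq₀]
  simp only [he]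
  simp [Finset.sum_ite_eq']

lemma pt_row {n : ℕ} {M N : Multiset ℕ} (h : Good n N) (p : Nat.Partition n) :
    (∑ q : Nat.Partition n, pt n M N (p, q)) = if p.parts = M then 1 else 0 := by
  unfold pt
  by_cases hp : p.parts = M
  · simp only [hp, true_and, if_true]; exact sum_if_parts h 1
  · simp [hp]

lemma pt_col {n : ℕ} {M N : Multiset ℕ} (h : Good n M) (q : Nat.Partition n) :
    (∑ p : Nat.Partition n, pt n M N (p, q)) = if q.parts = N then 1 else 0 := by
  unfold pt
  by_cases hq : q.parts = N
  · simp only [hq, and_true, if_true]; exact sum_if_parts h 1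
  · simp [hq]

lemma pt_diag {n : ℕ} {M : Multiset ℕ} (h : Good n M) :
    (∑ p : Nat.Partition n, pt n M M (p, p)) = 1 := by
  unfold pt
  simp only [and_self]
  exact sum_if_parts h 1

lemma pt_ne_zero {n : ℕ} {M N : Multiset ℕ} {z} (h : pt n M N z ≠ 0) :
    z.1.parts = M ∧ z.2.parts = N := by
  by_contra h'; exact h (by unfold pt; rw [if_neg h'])

/-- swapping sums over a Fintype and over a multiset -/
lemma sum_map_swap {α : Type*} [Fintype α] (A : Multiset ℕ) (f : ℕ → α → ℝ) :
    (∑ x : α, (A.map (fun a => f a x)).sum) = (A.map (fun a => ∑ x : α, f a x)).sum := by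
  induction A using Multiset.induction_on with
  | empty => simp
  | cons a s ih => simp [Finset.sum_add_distrib, ih]

lemma sum_map_div (A : Multiset ℕ) (f : ℕ → ℝ) (c : ℝ) :
    (A.map (fun a => f a / c)).sum = (A.map f).sum / c := by
  induction A using Multiset.induction_on with
  | empty => simp
  | cons a s ih => simp [ih, add_div]

lemma div_ite (P : Prop) [Decidable P] (a c : ℝ) :
    (if P then a else 0) / c = if P then a / c else 0 := by
  split <;> simp

lemma mul_ind (k : ℝ) (P : Prop) [Decidable P] :
    (k * if P then (1:ℝ) else 0) = if P then k else 0 := by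
  split <;> simp

end SMAux

namespace SMAux

lemma sort_triple {u v w : ℕ} (h1 : u ≤ v) (h2 : v ≤ w) :
    Multiset.sort (u ::ₘ v ::ₘ ({w} : Multiset ℕ)) (· ≤ ·) = [u, v, w] := by
  refine (fun hp h1 h2 => List.Perm.eq_of_pairwise' (r := (· ≤ · : ℕ → ℕ → Prop)) h1 h2 hp) ?_ ?_ ?_
  · have := Multiset.sort_eq (u ::ₘ v ::ₘ ({w} : Multiset ℕ)) (· ≤ · : ℕ → ℕ → Prop)
    rw [show (u ::ₘ v ::ₘ ({w} : Multiset ℕ)) = (([u, v, w] : List ℕ) : Multiset ℕ) by rfl] at this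
    exact Multiset.coe_eq_coe.mp this
  · exact Multiset.pairwise_sort _ _
  · simp [List.pairwise_cons]
    exact ⟨⟨h1, h1.trans h2⟩, h2⟩

lemma diffParts_eq {n : ℕ} {p q : Nat.Partition n} {u v w : ℕ} {C : Multiset ℕ}
    (hp : p.parts = u ::ₘ v ::ₘ C) (hq : q.parts = w ::ₘ C)
    (huw : u ≠ w) (hvw : v ≠ w) :
    diffParts p q = u ::ₘ v ::ₘ ({w} : Multiset ℕ) := by
  unfold diffParts
  rw [hp, hq]
  have e1 : (u ::ₘ v ::ₘ C) = (u ::ₘ v ::ₘ 0) + C := by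
    rw [Multiset.cons_add, Multiset.cons_add, zero_add]
  have e2 : (w ::ₘ C) = ({w} : Multiset ℕ) + C := by
    rw [Multiset.singleton_add]
  rw [e1, e2]
  rw [add_tsub_add_eq_tsub_right, add_tsub_add_eq_tsub_right]
  have e3 : (u ::ₘ v ::ₘ 0 : Multiset ℕ) - {w} = u ::ₘ v ::ₘ 0 := by
    rw [Multiset.sub_singleton]
    apply Multiset.erase_of_notMem
    simp [Ne.symm huw, Ne.symm hvw]
  have e4 : ({w} : Multiset ℕ) - (u ::ₘ v ::ₘ 0) = {w} := by
    have : (u ::ₘ v ::ₘ 0 : Multiset ℕ) = {u} + {v} := by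
      rw [Multiset.singleton_add]; rfl
    rw [this, tsub_add_eq_tsub_tsub]
    rw [show ({w} : Multiset ℕ) - {u} = {w} by
      rw [Multiset.sub_singleton]
      exact Multiset.erase_of_notMem (by simp only [Multiset.mem_singleton]; exact huw)]
    rw [Multiset.sub_singleton]
    exact Multiset.erase_of_notMem (by simp only [Multiset.mem_singleton]; exact hvw)
  rw [e3, e4]
  rfl

lemma ne_of_parts_card {n : ℕ} {p q : Nat.Partition n} {u v w : ℕ} {C : Multiset ℕ}
    (hp : p.parts = u ::ₘ v ::ₘ C) (hq : q.parts = w ::ₘ C) : p ≠ q := by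
  apply partition_ne_of_card
  rw [hp, hq]
  simp [Multiset.card_cons]

lemma sPart_mPart_eq {n : ℕ} {p q : Nat.Partition n} {u v w : ℕ} {C : Multiset ℕ}
    (hp : p.parts = u ::ₘ v ::ₘ C) (hq : q.parts = w ::ₘ C)
    (huv : u ≤ v) (hvw : v < w) :
    sPart n p q = u ∧ mPart n p q = v := by
  have hne : p ≠ q := ne_of_parts_card hp hq
  have hd : diffParts p q = u ::ₘ v ::ₘ ({w} : Multiset ℕ) :=
    diffParts_eq hp hq (by omega) (by omega)
  have hs : Multiset.sort (diffParts p q) (· ≤ ·) = [u, v, w] := by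
    rw [hd]; exact sort_triple huv (le_of_lt hvw)
  constructor
  · unfold sPart; rw [if_neg hne, hs]; rfl
  · unfold mPart; rw [if_neg hne, hs]; rfl

lemma sPart_comm {n : ℕ} (p q : Nat.Partition n) : sPart n p q = sPart n q p := by
  unfold sPart diffParts
  by_cases h : p = q
  · simp [h]
  · rw [if_neg h, if_neg (Ne.symm h), add_comm]

lemma mPart_comm {n : ℕ} (p q : Nat.Partition n) : mPart n p q = mPart n q p := by
  unfold mPart diffParts
  by_cases h : p = q
  · simp [h]
  · rw [if_neg h, if_neg (Ne.symm h), add_comm]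

lemma rho_le_one_of_adj {n : ℕ} {p q : Nat.Partition n} (h : (smGraph n).Adj p q) :
    rho n p q ≤ 1 := by
  unfold rho
  have := SimpleGraph.dist_le (SimpleGraph.Walk.cons h SimpleGraph.Walk.nil)
  simpa using this

lemma rho_self {n : ℕ} (p : Nat.Partition n) : rho n p p ≤ 1 := by
  unfold rho; rw [SimpleGraph.dist_self]; omega

lemma adj_of_rho_eq_one {n : ℕ} {p q : Nat.Partition n} (h : rho n p q = 1) :
    (smGraph n).Adj p q := by
  unfold rho at h
  have hreach : (smGraph n).Reachable p q := by
    by_contra hr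
    rw [SimpleGraph.dist_eq_zero_of_not_reachable hr] at h
    exact absurd h (by norm_num)
  obtain ⟨w, hw⟩ := hreach.exists_walk_length_eq_dist
  rw [h] at hw
  cases w with
  | nil => simp at hw
  | cons hadj w' =>
      simp [SimpleGraph.Walk.length_cons] at hw
      have := SimpleGraph.Walk.Nil.eq hw
      subst this
      exact hadj

/-- The workhorse adjacency lemma: `{b,c} ∪ A'` is adjacent to `{b+c} ∪ A'`. -/
lemma adj_merge {n : ℕ} {p q : Nat.Partition n} {b c : ℕ} {A' : Multiset ℕ}
    (hb : 1 ≤ b) (hc : 1 ≤ c)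
    (hp : p.parts = b ::ₘ c ::ₘ A') (hq : q.parts = (b + c) ::ₘ A') :
    (smGraph n).Adj p q := by
  show p ≠ q ∧ (IsSplitOf n p q ∨ IsSplitOf n q p)
  refine ⟨ne_of_parts_card hp hq, Or.inl ?_⟩
  refine ⟨b + c, by rw [hq]; exact Multiset.mem_cons_self _ _, b, hb, by omega, ?_⟩
  rw [hq, Multiset.erase_cons_head, hp]
  congr 2
  omega

end SMAux

namespace SMAux

/-- 0/1 indicator -/
def ind (P : Prop) : ℝ := if P then 1 else 0

lemma ind_nonneg (P : Prop) : 0 ≤ ind P := by unfold ind; split <;> norm_num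

lemma ind_le_one (P : Prop) : ind P ≤ 1 := by unfold ind; split <;> norm_num

lemma ind_of (P : Prop) (h : P) : ind P = 1 := by unfold ind; rw [if_pos h]

lemma ite_eq_mul_ind (P : Prop) [Decidable P] (x : ℝ) :
    (if P then x else 0) = x * ind P := by
  unfold ind; split <;> simp

lemma pt_row' {n : ℕ} {M N : Multiset ℕ} (h : Good n N) (p : Nat.Partition n) :
    (∑ q : Nat.Partition n, pt n M N (p, q)) = ind (p.parts = M) := by
  rw [pt_row h p]; unfold ind; split <;> simp_all

lemma pt_col' {n : ℕ} {M N : Multiset ℕ} (h : Good n M) (q : Nat.Partition n) :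
    (∑ p : Nat.Partition n, pt n M N (p, q)) = ind (q.parts = N) := by
  rw [pt_col h q]; unfold ind; split <;> simp_all

lemma quad_perm (x y u v : ℕ) (s : Multiset ℕ) :
    x ::ₘ y ::ₘ u ::ₘ v ::ₘ s = u ::ₘ v ::ₘ x ::ₘ y ::ₘ s := by
  rw [Multiset.cons_swap y u, Multiset.cons_swap x u, Multiset.cons_swap y v,
    Multiset.cons_swap x v]

lemma triple_perm (x u v : ℕ) (s : Multiset ℕ) :
    x ::ₘ u ::ₘ v ::ₘ s = u ::ₘ v ::ₘ x ::ₘ s := by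
  rw [Multiset.cons_swap x u, Multiset.cons_swap x v]

/-- The one-step coupling table for `σ = {b,c} ∪ A`, `τ = {b+c} ∪ A`. -/
def cpl (n b c : ℕ) (A : Multiset ℕ) (z : Nat.Partition n × Nat.Partition n) : ℝ :=
  (((n : ℝ) - ((b:ℝ)+(c:ℝ))) * pt n (b ::ₘ c ::ₘ A) ((b+c) ::ₘ A) z
  + ((b:ℝ)+(c:ℝ)) * pt n (b ::ₘ c ::ₘ A) (b ::ₘ c ::ₘ A) z
  + ((b:ℝ)+(c:ℝ)) * pt n ((b+c) ::ₘ A) ((b+c) ::ₘ A) z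
  + (∑ r ∈ Finset.Ico 1 b, (c : ℝ) * pt n ((b+c) ::ₘ A) (r ::ₘ (b+c-r) ::ₘ A) z)
  + (∑ r ∈ Finset.Ico (b+1) (b+c), (b : ℝ) * pt n ((b+c) ::ₘ A) (r ::ₘ (b+c-r) ::ₘ A) z)
  + (∑ r ∈ Finset.Ico 1 b, (b : ℝ) * pt n (r ::ₘ (b-r) ::ₘ c ::ₘ A) (r ::ₘ (b+c-r) ::ₘ A) z)
  + (∑ r ∈ Finset.Ico 1 c, (c : ℝ) * pt n (r ::ₘ (c-r) ::ₘ b ::ₘ A) ((b+r) ::ₘ (c-r) ::ₘ A) z)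
  + (A.map (fun (a : ℕ) => 2*((b:ℝ)*(a:ℝ)) * pt n ((b+a) ::ₘ c ::ₘ A.erase a) ((b+c+a) ::ₘ A.erase a) z)).sum
  + (A.map (fun (a : ℕ) => 2*((c:ℝ)*(a:ℝ)) * pt n ((c+a) ::ₘ b ::ₘ A.erase a) ((b+c+a) ::ₘ A.erase a) z)).sum
  + (A.map (fun (a : ℕ) => ∑ r ∈ Finset.Ico 1 a,
      (a : ℝ) * pt n (b ::ₘ c ::ₘ r ::ₘ (a-r) ::ₘ A.erase a) ((b+c) ::ₘ r ::ₘ (a-r) ::ₘ A.erase a) z)).sum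
  + (A.map (fun (a : ℕ) => ((A.erase a).map (fun (d : ℕ) =>
      (a:ℝ)*(d:ℝ) * pt n (b ::ₘ c ::ₘ (a+d) ::ₘ ((A.erase a).erase d))
        ((b+c) ::ₘ (a+d) ::ₘ ((A.erase a).erase d)) z)).sum)).sum
  ) / (n : ℝ)^2

section Goodness

variable {n b c : ℕ} {A : Multiset ℕ}
variable (hb : 1 ≤ b) (hbc : b ≤ c) (hA : ∀ i ∈ A, 0 < i) (hs : b + c + A.sum = n)

lemma sum_erase_of_mem {a : ℕ} (ha : a ∈ A) : a + (A.erase a).sum = A.sum := by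
  conv_rhs => rw [← Multiset.cons_erase ha]
  rw [Multiset.sum_cons]

include hb hbc hA hs

lemma g_sigma : Good n (b ::ₘ c ::ₘ A) := by
  constructor
  · intro i hi
    simp only [Multiset.mem_cons] at hi
    rcases hi with h | h | h
    · omega
    · omega
    · exact hA i h
  · simp only [Multiset.sum_cons]; omega

lemma g_tau : Good n ((b + c) ::ₘ A) := by
  constructor
  · intro i hi
    simp only [Multiset.mem_cons] at hi
    rcases hi with h | h
    · omega
    · exact hA i h
  · simp only [Multiset.sum_cons]; omega

lemma g_O {r : ℕ} (h1 : 1 ≤ r) (h2 : r < b + c) : Good n (r ::ₘ (b+c-r) ::ₘ A) := by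
  constructor
  · intro i hi
    simp only [Multiset.mem_cons] at hi
    rcases hi with h | h | h
    · omega
    · omega
    · exact hA i h
  · simp only [Multiset.sum_cons]; omega

lemma g_splitb {r : ℕ} (h1 : 1 ≤ r) (h2 : r < b) : Good n (r ::ₘ (b-r) ::ₘ c ::ₘ A) := by
  constructor
  · intro i hi
    simp only [Multiset.mem_cons] at hi
    rcases hi with h | h | h | h
    · omega
    · omega
    · omega
    · exact hA i h
  · simp only [Multiset.sum_cons]; omega

lemma g_splitc {r : ℕ} (h1 : 1 ≤ r) (h2 : r < c) : Good n (r ::ₘ (c-r) ::ₘ b ::ₘ A) := by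
  constructor
  · intro i hi
    simp only [Multiset.mem_cons] at hi
    rcases hi with h | h | h | h
    · omega
    · omega
    · omega
    · exact hA i h
  · simp only [Multiset.sum_cons]; omega

lemma g_T5Y {r : ℕ} (h1 : 1 ≤ r) (h2 : r < c) : Good n ((b+r) ::ₘ (c-r) ::ₘ A) := by
  constructor
  · intro i hi
    simp only [Multiset.mem_cons] at hi
    rcases hi with h | h | h
    · omega
    · omega
    · exact hA i h
  · simp only [Multiset.sum_cons]; omega

lemma g_T6X {a : ℕ} (ha : a ∈ A) : Good n ((b+a) ::ₘ c ::ₘ A.erase a) := by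
  have he := sum_erase_of_mem ha
  constructor
  · intro i hi
    simp only [Multiset.mem_cons] at hi
    rcases hi with h | h | h
    · have := hA a ha; omega
    · omega
    · exact hA i (Multiset.mem_of_mem_erase h)
  · simp only [Multiset.sum_cons]; omega

lemma g_T7X {a : ℕ} (ha : a ∈ A) : Good n ((c+a) ::ₘ b ::ₘ A.erase a) := by
  have he := sum_erase_of_mem ha
  constructor
  · intro i hi
    simp only [Multiset.mem_cons] at hi
    rcases hi with h | h | h
    · have := hA a ha; omega
    · omega
    · exact hA i (Multiset.mem_of_mem_erase h)
  · simp only [Multiset.sum_cons]; omega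

lemma g_mrg {a : ℕ} (ha : a ∈ A) : Good n ((b+c+a) ::ₘ A.erase a) := by
  have he := sum_erase_of_mem ha
  constructor
  · intro i hi
    simp only [Multiset.mem_cons] at hi
    rcases hi with h | h
    · omega
    · exact hA i (Multiset.mem_of_mem_erase h)
  · simp only [Multiset.sum_cons]; omega

lemma g_T8X {a r : ℕ} (ha : a ∈ A) (h1 : 1 ≤ r) (h2 : r < a) :
    Good n (b ::ₘ c ::ₘ r ::ₘ (a-r) ::ₘ A.erase a) := by
  have he := sum_erase_of_mem ha
  constructor
  · intro i hi
    simp only [Multiset.mem_cons] at hi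
    rcases hi with h | h | h | h | h
    · omega
    · omega
    · omega
    · omega
    · exact hA i (Multiset.mem_of_mem_erase h)
  · simp only [Multiset.sum_cons]; omega

lemma g_T8Y {a r : ℕ} (ha : a ∈ A) (h1 : 1 ≤ r) (h2 : r < a) :
    Good n ((b+c) ::ₘ r ::ₘ (a-r) ::ₘ A.erase a) := by
  have he := sum_erase_of_mem ha
  constructor
  · intro i hi
    simp only [Multiset.mem_cons] at hi
    rcases hi with h | h | h | h
    · omega
    · omega
    · omega
    · exact hA i (Multiset.mem_of_mem_erase h)
  · simp only [Multiset.sum_cons]; omega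

lemma g_T9X {a d : ℕ} (ha : a ∈ A) (hd : d ∈ A.erase a) :
    Good n (b ::ₘ c ::ₘ (a+d) ::ₘ ((A.erase a).erase d)) := by
  have he := sum_erase_of_mem ha
  have he2 : d + ((A.erase a).erase d).sum = (A.erase a).sum := by
    conv_rhs => rw [← Multiset.cons_erase hd]
    rw [Multiset.sum_cons]
  have hd' := hA d (Multiset.mem_of_mem_erase hd)
  have ha' := hA a ha
  constructor
  · intro i hi
    simp only [Multiset.mem_cons] at hi
    rcases hi with h | h | h | h
    · omega
    · omega
    · omega
    · exact hA i (Multiset.mem_of_mem_erase (Multiset.mem_of_mem_erase h))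
  · simp only [Multiset.sum_cons]; omega

lemma g_T9Y {a d : ℕ} (ha : a ∈ A) (hd : d ∈ A.erase a) :
    Good n ((b+c) ::ₘ (a+d) ::ₘ ((A.erase a).erase d)) := by
  have he := sum_erase_of_mem ha
  have he2 : d + ((A.erase a).erase d).sum = (A.erase a).sum := by
    conv_rhs => rw [← Multiset.cons_erase hd]
    rw [Multiset.sum_cons]
  have hd' := hA d (Multiset.mem_of_mem_erase hd)
  have ha' := hA a ha
  constructor
  · intro i hi
    simp only [Multiset.mem_cons] at hi
    rcases hi with h | h | h
    · omega
    · omega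
    · exact hA i (Multiset.mem_of_mem_erase (Multiset.mem_of_mem_erase h))
  · simp only [Multiset.sum_cons]; omega

end Goodness

end SMAux

namespace SMAux

section RowHelpers

variable {n : ℕ}

lemma sum_const_pt {M N : Multiset ℕ} (h : Good n N) (k : ℝ) (p : Nat.Partition n) :
    (∑ q : Nat.Partition n, k * pt n M N (p, q)) = k * ind (p.parts = M) := by
  rw [← Finset.mul_sum, pt_row' h]

lemma sum_finsum_pt {S : Finset ℕ} {M N : ℕ → Multiset ℕ} {k : ℕ → ℝ}
    (hg : ∀ r ∈ S, Good n (N r)) (p : Nat.Partition n) :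
    (∑ q : Nat.Partition n, ∑ r ∈ S, k r * pt n (M r) (N r) (p, q))
    = ∑ r ∈ S, k r * ind (p.parts = M r) := by
  rw [Finset.sum_comm]
  exact Finset.sum_congr rfl fun r hr => sum_const_pt (hg r hr) (k r) p

lemma sum_finsum_pt_const {S : Finset ℕ} {M : Multiset ℕ} {N : ℕ → Multiset ℕ} {k : ℝ}
    (hg : ∀ r ∈ S, Good n (N r)) (p : Nat.Partition n) :
    (∑ q : Nat.Partition n, ∑ r ∈ S, k * pt n M (N r) (p, q))
    = (S.card : ℝ) * (k * ind (p.parts = M)) := by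
  rw [Finset.sum_comm]
  rw [Finset.sum_congr rfl (fun r hr => sum_const_pt (hg r hr) k p)]
  rw [Finset.sum_const, nsmul_eq_mul]

lemma sum_map_pt {A : Multiset ℕ} {M N : ℕ → Multiset ℕ} {k : ℕ → ℝ}
    (hg : ∀ a ∈ A, Good n (N a)) (p : Nat.Partition n) :
    (∑ q : Nat.Partition n, (A.map (fun a => k a * pt n (M a) (N a) (p, q))).sum)
    = (A.map (fun a => k a * ind (p.parts = M a))).sum := by
  rw [sum_map_swap]
  exact congrArg Multiset.sum (Multiset.map_congr rfl fun a ha => sum_const_pt (hg a ha) (k a) p)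

lemma sum_mapfin_pt {A : Multiset ℕ} {S : ℕ → Finset ℕ} {M N : ℕ → ℕ → Multiset ℕ}
    {k : ℕ → ℕ → ℝ} (hg : ∀ a ∈ A, ∀ r ∈ S a, Good n (N a r)) (p : Nat.Partition n) :
    (∑ q : Nat.Partition n, (A.map (fun a => ∑ r ∈ S a, k a r * pt n (M a r) (N a r) (p, q))).sum)
    = (A.map (fun a => ∑ r ∈ S a, k a r * ind (p.parts = M a r))).sum := by
  rw [sum_map_swap]
  exact congrArg Multiset.sum (Multiset.map_congr rfl fun a ha =>
    sum_finsum_pt (hg a ha) p)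

lemma sum_mapmap_pt {A : Multiset ℕ} {B : ℕ → Multiset ℕ} {M N : ℕ → ℕ → Multiset ℕ}
    {k : ℕ → ℕ → ℝ} (hg : ∀ a ∈ A, ∀ d ∈ B a, Good n (N a d)) (p : Nat.Partition n) :
    (∑ q : Nat.Partition n,
      (A.map (fun a => ((B a).map (fun d => k a d * pt n (M a d) (N a d) (p, q))).sum)).sum)
    = (A.map (fun a => ((B a).map (fun d => k a d * ind (p.parts = M a d))).sum)).sum := by
  rw [sum_map_swap]
  refine congrArg Multiset.sum (Multiset.map_congr rfl fun a ha => ?_)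
  rw [sum_map_swap]
  exact congrArg Multiset.sum (Multiset.map_congr rfl fun d hd => sum_const_pt (hg a ha d hd) _ p)

end RowHelpers

section Row

variable {n b c : ℕ} {A : Multiset ℕ}

lemma cpl_row (hb : 1 ≤ b) (hbc : b ≤ c) (hA : ∀ i ∈ A, 0 < i) (hs : b + c + A.sum = n)
    (σ : Nat.Partition n) (hσ : σ.parts = b ::ₘ c ::ₘ A) (p : Nat.Partition n) :
    (∑ q : Nat.Partition n, cpl n b c A (p, q)) = smKernel n σ p := by
  have hc : 1 ≤ c := le_trans hb hbc
  have hn0 : (n : ℝ) ≠ 0 := Nat.cast_ne_zero.mpr (by omega)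
  -- Step 1: compute the left-hand side.
  have hL : (∑ q : Nat.Partition n, cpl n b c A (p, q)) =
      (((n : ℝ) - ((b:ℝ)+(c:ℝ))) * ind (p.parts = b ::ₘ c ::ₘ A)
      + ((b:ℝ)+(c:ℝ)) * ind (p.parts = b ::ₘ c ::ₘ A)
      + ((b:ℝ)+(c:ℝ)) * ind (p.parts = (b+c) ::ₘ A)
      + ((b:ℝ) - 1) * ((c:ℝ) * ind (p.parts = (b+c) ::ₘ A))
      + ((c:ℝ) - 1) * ((b:ℝ) * ind (p.parts = (b+c) ::ₘ A))
      + (∑ r ∈ Finset.Ico 1 b, (b : ℝ) * ind (p.parts = r ::ₘ (b-r) ::ₘ c ::ₘ A))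
      + (∑ r ∈ Finset.Ico 1 c, (c : ℝ) * ind (p.parts = r ::ₘ (c-r) ::ₘ b ::ₘ A))
      + (A.map (fun (a : ℕ) => 2*((b:ℝ)*(a:ℝ)) * ind (p.parts = (b+a) ::ₘ c ::ₘ A.erase a))).sum
      + (A.map (fun (a : ℕ) => 2*((c:ℝ)*(a:ℝ)) * ind (p.parts = (c+a) ::ₘ b ::ₘ A.erase a))).sum
      + (A.map (fun (a : ℕ) => ∑ r ∈ Finset.Ico 1 a,
          (a : ℝ) * ind (p.parts = b ::ₘ c ::ₘ r ::ₘ (a-r) ::ₘ A.erase a))).sum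
      + (A.map (fun (a : ℕ) => ((A.erase a).map (fun (d : ℕ) =>
          (a:ℝ)*(d:ℝ) * ind (p.parts = b ::ₘ c ::ₘ (a+d) ::ₘ ((A.erase a).erase d)))).sum)).sum
      ) / (n : ℝ)^2 := by
    simp only [cpl]
    rw [← Finset.sum_div]
    congr 1
    simp only [Finset.sum_add_distrib]
    rw [sum_const_pt (g_tau hb hbc hA hs) _ p]
    rw [sum_const_pt (g_sigma hb hbc hA hs) _ p]
    rw [sum_const_pt (g_tau hb hbc hA hs) _ p]
    rw [sum_finsum_pt_const (S := Finset.Ico 1 b) (M := (b+c) ::ₘ A)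
      (N := fun r => r ::ₘ (b+c-r) ::ₘ A) (k := (c:ℝ))
      (fun r hr => by
        rw [Finset.mem_Ico] at hr
        exact g_O hb hbc hA hs hr.1 (by omega)) p]
    rw [sum_finsum_pt_const (S := Finset.Ico (b+1) (b+c)) (M := (b+c) ::ₘ A)
      (N := fun r => r ::ₘ (b+c-r) ::ₘ A) (k := (b:ℝ))
      (fun r hr => by
        rw [Finset.mem_Ico] at hr
        exact g_O hb hbc hA hs (by omega) (by omega)) p]
    rw [sum_finsum_pt (S := Finset.Ico 1 b) (M := fun r => r ::ₘ (b-r) ::ₘ c ::ₘ A)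
      (N := fun r => r ::ₘ (b+c-r) ::ₘ A) (k := fun _ => (b:ℝ))
      (fun r hr => by
        rw [Finset.mem_Ico] at hr
        exact g_O hb hbc hA hs hr.1 (by omega)) p]
    rw [sum_finsum_pt (S := Finset.Ico 1 c) (M := fun r => r ::ₘ (c-r) ::ₘ b ::ₘ A)
      (N := fun r => (b+r) ::ₘ (c-r) ::ₘ A) (k := fun _ => (c:ℝ))
      (fun r hr => by
        rw [Finset.mem_Ico] at hr
        exact g_T5Y hb hbc hA hs hr.1 hr.2) p]
    rw [sum_map_pt (M := fun a => (b+a) ::ₘ c ::ₘ A.erase a)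
      (N := fun a => (b+c+a) ::ₘ A.erase a) (k := fun a => 2*((b:ℝ)*(a:ℝ)))
      (fun a ha => g_mrg hb hbc hA hs ha) p]
    rw [sum_map_pt (M := fun a => (c+a) ::ₘ b ::ₘ A.erase a)
      (N := fun a => (b+c+a) ::ₘ A.erase a) (k := fun a => 2*((c:ℝ)*(a:ℝ)))
      (fun a ha => g_mrg hb hbc hA hs ha) p]
    rw [sum_mapfin_pt (S := fun a => Finset.Ico 1 a)
      (M := fun a r => b ::ₘ c ::ₘ r ::ₘ (a-r) ::ₘ A.erase a)
      (N := fun a r => (b+c) ::ₘ r ::ₘ (a-r) ::ₘ A.erase a) (k := fun a _ => (a:ℝ))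
      (fun a ha r hr => by
        rw [Finset.mem_Ico] at hr
        exact g_T8Y hb hbc hA hs ha hr.1 hr.2) p]
    rw [sum_mapmap_pt (B := fun a => A.erase a)
      (M := fun a d => b ::ₘ c ::ₘ (a+d) ::ₘ ((A.erase a).erase d))
      (N := fun a d => (b+c) ::ₘ (a+d) ::ₘ ((A.erase a).erase d)) (k := fun a d => (a:ℝ)*(d:ℝ))
      (fun a ha d hd => g_T9Y hb hbc hA hs ha hd) p]
    rw [Nat.card_Ico, Nat.card_Ico, Nat.cast_sub hb,
      Nat.cast_sub (show b+1 ≤ b+c by omega), Nat.cast_one]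
    push_cast
    ring
  -- Step 2: compute the kernel.
  have hid : (if p = σ then (1:ℝ)/(n:ℝ) else 0)
      = ((n:ℝ) * ind (p.parts = b ::ₘ c ::ₘ A))/(n:ℝ)^2 := by
    have hiff : (p = σ) ↔ (p.parts = b ::ₘ c ::ₘ A) :=
      ⟨fun h => by rw [h, hσ], fun h => partition_eq (by rw [hσ]; exact h)⟩
    unfold ind
    by_cases h : p = σ
    · rw [if_pos h, if_pos (hiff.mp h), mul_one]
      field_simp
    · rw [if_neg h, if_neg (fun hh => h (hiff.mpr hh)), mul_zero, zero_div]
  have hK : smKernel n σ p =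
      ( (n:ℝ) * ind (p.parts = b ::ₘ c ::ₘ A)
      + ((∑ r ∈ Finset.Ico 1 b, (b : ℝ) * ind (p.parts = r ::ₘ (b-r) ::ₘ c ::ₘ A))
        + ((∑ r ∈ Finset.Ico 1 c, (c : ℝ) * ind (p.parts = r ::ₘ (c-r) ::ₘ b ::ₘ A))
        + (A.map (fun (a : ℕ) => ∑ r ∈ Finset.Ico 1 a,
            (a:ℝ) * ind (p.parts = b ::ₘ c ::ₘ r ::ₘ (a-r) ::ₘ A.erase a))).sum))
      + (((b:ℝ)*(c:ℝ) * ind (p.parts = (b+c) ::ₘ A)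
          + (A.map (fun (a:ℕ) => (b:ℝ)*(a:ℝ) * ind (p.parts = (b+a) ::ₘ c ::ₘ A.erase a))).sum)
        + (((c:ℝ)*(b:ℝ) * ind (p.parts = (b+c) ::ₘ A)
          + (A.map (fun (a:ℕ) => (c:ℝ)*(a:ℝ) * ind (p.parts = (c+a) ::ₘ b ::ₘ A.erase a))).sum)
        + (A.map (fun (a:ℕ) =>
            (a:ℝ)*(b:ℝ) * ind (p.parts = (b+a) ::ₘ c ::ₘ A.erase a)
            + ((a:ℝ)*(c:ℝ) * ind (p.parts = (c+a) ::ₘ b ::ₘ A.erase a)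
            + ((A.erase a).map (fun (d:ℕ) =>
                (a:ℝ)*(d:ℝ) * ind (p.parts = b ::ₘ c ::ₘ (a+d) ::ₘ (A.erase a).erase d))).sum))).sum))
      ) / (n:ℝ)^2 := by
    unfold smKernel
    rw [hσ]
    rw [hid]
    simp only [Multiset.map_cons, Multiset.sum_cons, Multiset.erase_cons_head, erase_cons_cons]
    rw [show Multiset.map (fun a => ∑ r ∈ Finset.Ico 1 a,
        if p.parts = r ::ₘ (a - r) ::ₘ (b ::ₘ c ::ₘ A).erase a then (a:ℝ) / (n:ℝ) ^ 2 else 0) A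
      = Multiset.map (fun a => ∑ r ∈ Finset.Ico 1 a,
        if p.parts = b ::ₘ c ::ₘ r ::ₘ (a - r) ::ₘ A.erase a then (a:ℝ) / (n:ℝ) ^ 2 else 0) A from
      Multiset.map_congr rfl (fun a ha => Finset.sum_congr rfl (fun r _ => by
        rw [erase_cons_cons_of_mem b c ha, quad_perm]))]
    rw [show Multiset.map (fun d => if p.parts = (b + d) ::ₘ (c ::ₘ A).erase d
          then (b:ℝ) * (d:ℝ) / (n:ℝ) ^ 2 else 0) A
      = Multiset.map (fun d => if p.parts = (b + d) ::ₘ c ::ₘ A.erase d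
          then (b:ℝ) * (d:ℝ) / (n:ℝ) ^ 2 else 0) A from
      Multiset.map_congr rfl (fun d hd => by rw [erase_cons_of_mem c hd])]
    rw [Nat.add_comm c b]
    rw [show Multiset.map (fun d => if p.parts = (c + d) ::ₘ (b ::ₘ A).erase d
          then (c:ℝ) * (d:ℝ) / (n:ℝ) ^ 2 else 0) A
      = Multiset.map (fun d => if p.parts = (c + d) ::ₘ b ::ₘ A.erase d
          then (c:ℝ) * (d:ℝ) / (n:ℝ) ^ 2 else 0) A from
      Multiset.map_congr rfl (fun d hd => by rw [erase_cons_of_mem b hd])]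
    rw [show Multiset.map (fun a => (Multiset.map (fun d =>
          if p.parts = (a + d) ::ₘ ((b ::ₘ c ::ₘ A).erase a).erase d
          then (a:ℝ) * (d:ℝ) / (n:ℝ) ^ 2 else 0) ((b ::ₘ c ::ₘ A).erase a)).sum) A
      = Multiset.map (fun a =>
          (if p.parts = (b+a) ::ₘ c ::ₘ A.erase a then (a:ℝ) * (b:ℝ) / (n:ℝ)^2 else 0)
          + ((if p.parts = (c+a) ::ₘ b ::ₘ A.erase a then (a:ℝ) * (c:ℝ) / (n:ℝ)^2 else 0)
          + (Multiset.map (fun d => if p.parts = b ::ₘ c ::ₘ (a+d) ::ₘ (A.erase a).erase d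
              then (a:ℝ) * (d:ℝ) / (n:ℝ)^2 else 0) (A.erase a)).sum)) A from
      Multiset.map_congr rfl (fun a ha => by
        rw [erase_cons_cons_of_mem b c ha, Multiset.map_cons, Multiset.map_cons,
          Multiset.sum_cons, Multiset.sum_cons, Multiset.erase_cons_head,
          erase_cons_cons, Nat.add_comm a b, Nat.add_comm a c]
        rw [show Multiset.map (fun d => if p.parts = (a + d) ::ₘ (b ::ₘ c ::ₘ A.erase a).erase d
              then (a:ℝ) * (d:ℝ) / (n:ℝ) ^ 2 else 0) (A.erase a)
          = Multiset.map (fun d => if p.parts = b ::ₘ c ::ₘ (a+d) ::ₘ (A.erase a).erase d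
              then (a:ℝ) * (d:ℝ) / (n:ℝ) ^ 2 else 0) (A.erase a) from
          Multiset.map_congr rfl (fun d hd => by
            rw [erase_cons_cons_of_mem b c hd, triple_perm])])]
    simp only [ite_eq_mul_ind, div_mul_eq_mul_div, ← Finset.sum_div, sum_map_div,
      ← add_div]
  rw [hL, hK]
  congr 1
  rw [Multiset.sum_map_add, Multiset.sum_map_add]
  rw [show (A.map (fun (a : ℕ) => 2*((b:ℝ)*(a:ℝ)) * ind (p.parts = (b+a) ::ₘ c ::ₘ A.erase a))).sum
    = (A.map (fun (a:ℕ) => (b:ℝ)*(a:ℝ) * ind (p.parts = (b+a) ::ₘ c ::ₘ A.erase a))).sum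
      + (A.map (fun (a:ℕ) => (a:ℝ)*(b:ℝ) * ind (p.parts = (b+a) ::ₘ c ::ₘ A.erase a))).sum from by
    rw [← Multiset.sum_map_add]
    exact congrArg Multiset.sum (Multiset.map_congr rfl (fun a ha => by ring))]
  rw [show (A.map (fun (a : ℕ) => 2*((c:ℝ)*(a:ℝ)) * ind (p.parts = (c+a) ::ₘ b ::ₘ A.erase a))).sum
    = (A.map (fun (a:ℕ) => (c:ℝ)*(a:ℝ) * ind (p.parts = (c+a) ::ₘ b ::ₘ A.erase a))).sum
      + (A.map (fun (a:ℕ) => (a:ℝ)*(c:ℝ) * ind (p.parts = (c+a) ::ₘ b ::ₘ A.erase a))).sum from by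
    rw [← Multiset.sum_map_add]
    exact congrArg Multiset.sum (Multiset.map_congr rfl (fun a ha => by ring))]
  ring

end Row

end SMAux

namespace SMAux

section ColHelpers

variable {n : ℕ}

lemma col_const_pt {M N : Multiset ℕ} (h : Good n M) (k : ℝ) (q : Nat.Partition n) :
    (∑ p : Nat.Partition n, k * pt n M N (p, q)) = k * ind (q.parts = N) := by
  rw [← Finset.mul_sum, pt_col' h]

lemma col_finsum_pt {S : Finset ℕ} {M N : ℕ → Multiset ℕ} {k : ℕ → ℝ}
    (hg : ∀ r ∈ S, Good n (M r)) (q : Nat.Partition n) :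
    (∑ p : Nat.Partition n, ∑ r ∈ S, k r * pt n (M r) (N r) (p, q))
    = ∑ r ∈ S, k r * ind (q.parts = N r) := by
  rw [Finset.sum_comm]
  exact Finset.sum_congr rfl fun r hr => col_const_pt (hg r hr) (k r) q

lemma col_map_pt {A : Multiset ℕ} {M N : ℕ → Multiset ℕ} {k : ℕ → ℝ}
    (hg : ∀ a ∈ A, Good n (M a)) (q : Nat.Partition n) :
    (∑ p : Nat.Partition n, (A.map (fun a => k a * pt n (M a) (N a) (p, q))).sum)
    = (A.map (fun a => k a * ind (q.parts = N a))).sum := by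
  rw [sum_map_swap]
  exact congrArg Multiset.sum (Multiset.map_congr rfl fun a ha => col_const_pt (hg a ha) (k a) q)

lemma col_mapfin_pt {A : Multiset ℕ} {S : ℕ → Finset ℕ} {M N : ℕ → ℕ → Multiset ℕ}
    {k : ℕ → ℕ → ℝ} (hg : ∀ a ∈ A, ∀ r ∈ S a, Good n (M a r)) (q : Nat.Partition n) :
    (∑ p : Nat.Partition n, (A.map (fun a => ∑ r ∈ S a, k a r * pt n (M a r) (N a r) (p, q))).sum)
    = (A.map (fun a => ∑ r ∈ S a, k a r * ind (q.parts = N a r))).sum := by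
  rw [sum_map_swap]
  exact congrArg Multiset.sum (Multiset.map_congr rfl fun a ha =>
    col_finsum_pt (hg a ha) q)

lemma col_mapmap_pt {A : Multiset ℕ} {B : ℕ → Multiset ℕ} {M N : ℕ → ℕ → Multiset ℕ}
    {k : ℕ → ℕ → ℝ} (hg : ∀ a ∈ A, ∀ d ∈ B a, Good n (M a d)) (q : Nat.Partition n) :
    (∑ p : Nat.Partition n,
      (A.map (fun a => ((B a).map (fun d => k a d * pt n (M a d) (N a d) (p, q))).sum)).sum)
    = (A.map (fun a => ((B a).map (fun d => k a d * ind (q.parts = N a d))).sum)).sum := by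
  rw [sum_map_swap]
  refine congrArg Multiset.sum (Multiset.map_congr rfl fun a ha => ?_)
  rw [sum_map_swap]
  exact congrArg Multiset.sum (Multiset.map_congr rfl fun d hd => col_const_pt (hg a ha d hd) _ q)

end ColHelpers

section Col

variable {n b c : ℕ} {A : Multiset ℕ}

lemma cpl_col (hb : 1 ≤ b) (hbc : b ≤ c) (hA : ∀ i ∈ A, 0 < i) (hs : b + c + A.sum = n)
    (τ : Nat.Partition n) (hτ : τ.parts = (b+c) ::ₘ A) (q : Nat.Partition n) :
    (∑ p : Nat.Partition n, cpl n b c A (p, q)) = smKernel n τ q := by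
  have hc : 1 ≤ c := le_trans hb hbc
  have hn0 : (n : ℝ) ≠ 0 := Nat.cast_ne_zero.mpr (by omega)
  -- Step 1: compute the left-hand side.
  have hL : (∑ p : Nat.Partition n, cpl n b c A (p, q)) =
      (((n : ℝ) - ((b:ℝ)+(c:ℝ))) * ind (q.parts = (b+c) ::ₘ A)
      + ((b:ℝ)+(c:ℝ)) * ind (q.parts = b ::ₘ c ::ₘ A)
      + ((b:ℝ)+(c:ℝ)) * ind (q.parts = (b+c) ::ₘ A)
      + (∑ r ∈ Finset.Ico 1 b, (c : ℝ) * ind (q.parts = r ::ₘ (b+c-r) ::ₘ A))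
      + (∑ r ∈ Finset.Ico (b+1) (b+c), (b : ℝ) * ind (q.parts = r ::ₘ (b+c-r) ::ₘ A))
      + (∑ r ∈ Finset.Ico 1 b, (b : ℝ) * ind (q.parts = r ::ₘ (b+c-r) ::ₘ A))
      + (∑ r ∈ Finset.Ico 1 c, (c : ℝ) * ind (q.parts = (b+r) ::ₘ (c-r) ::ₘ A))
      + (A.map (fun (a : ℕ) => 2*((b:ℝ)*(a:ℝ)) * ind (q.parts = (b+c+a) ::ₘ A.erase a))).sum
      + (A.map (fun (a : ℕ) => 2*((c:ℝ)*(a:ℝ)) * ind (q.parts = (b+c+a) ::ₘ A.erase a))).sum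
      + (A.map (fun (a : ℕ) => ∑ r ∈ Finset.Ico 1 a,
          (a : ℝ) * ind (q.parts = (b+c) ::ₘ r ::ₘ (a-r) ::ₘ A.erase a))).sum
      + (A.map (fun (a : ℕ) => ((A.erase a).map (fun (d : ℕ) =>
          (a:ℝ)*(d:ℝ) * ind (q.parts = (b+c) ::ₘ (a+d) ::ₘ ((A.erase a).erase d)))).sum)).sum
      ) / (n : ℝ)^2 := by
    simp only [cpl]
    rw [← Finset.sum_div]
    congr 1
    simp only [Finset.sum_add_distrib]
    rw [col_const_pt (g_sigma hb hbc hA hs) _ q]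
    rw [col_const_pt (g_sigma hb hbc hA hs) _ q]
    rw [col_const_pt (g_tau hb hbc hA hs) _ q]
    rw [col_finsum_pt (S := Finset.Ico 1 b) (M := fun _ => (b+c) ::ₘ A)
      (N := fun r => r ::ₘ (b+c-r) ::ₘ A) (k := fun _ => (c:ℝ))
      (fun r hr => g_tau hb hbc hA hs) q]
    rw [col_finsum_pt (S := Finset.Ico (b+1) (b+c)) (M := fun _ => (b+c) ::ₘ A)
      (N := fun r => r ::ₘ (b+c-r) ::ₘ A) (k := fun _ => (b:ℝ))
      (fun r hr => g_tau hb hbc hA hs) q]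
    rw [col_finsum_pt (S := Finset.Ico 1 b) (M := fun r => r ::ₘ (b-r) ::ₘ c ::ₘ A)
      (N := fun r => r ::ₘ (b+c-r) ::ₘ A) (k := fun _ => (b:ℝ))
      (fun r hr => by
        rw [Finset.mem_Ico] at hr
        exact g_splitb hb hbc hA hs hr.1 hr.2) q]
    rw [col_finsum_pt (S := Finset.Ico 1 c) (M := fun r => r ::ₘ (c-r) ::ₘ b ::ₘ A)
      (N := fun r => (b+r) ::ₘ (c-r) ::ₘ A) (k := fun _ => (c:ℝ))
      (fun r hr => by
        rw [Finset.mem_Ico] at hr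
        exact g_splitc hb hbc hA hs hr.1 hr.2) q]
    rw [col_map_pt (M := fun a => (b+a) ::ₘ c ::ₘ A.erase a)
      (N := fun a => (b+c+a) ::ₘ A.erase a) (k := fun a => 2*((b:ℝ)*(a:ℝ)))
      (fun a ha => g_T6X hb hbc hA hs ha) q]
    rw [col_map_pt (M := fun a => (c+a) ::ₘ b ::ₘ A.erase a)
      (N := fun a => (b+c+a) ::ₘ A.erase a) (k := fun a => 2*((c:ℝ)*(a:ℝ)))
      (fun a ha => g_T7X hb hbc hA hs ha) q]
    rw [col_mapfin_pt (S := fun a => Finset.Ico 1 a)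
      (M := fun a r => b ::ₘ c ::ₘ r ::ₘ (a-r) ::ₘ A.erase a)
      (N := fun a r => (b+c) ::ₘ r ::ₘ (a-r) ::ₘ A.erase a) (k := fun a _ => (a:ℝ))
      (fun a ha r hr => by
        rw [Finset.mem_Ico] at hr
        exact g_T8X hb hbc hA hs ha hr.1 hr.2) q]
    rw [col_mapmap_pt (B := fun a => A.erase a)
      (M := fun a d => b ::ₘ c ::ₘ (a+d) ::ₘ ((A.erase a).erase d))
      (N := fun a d => (b+c) ::ₘ (a+d) ::ₘ ((A.erase a).erase d)) (k := fun a d => (a:ℝ)*(d:ℝ))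
      (fun a ha d hd => g_T9X hb hbc hA hs ha hd) q]
  -- Step 2: compute the kernel.
  have hid : (if q = τ then (1:ℝ)/(n:ℝ) else 0)
      = ((n:ℝ) * ind (q.parts = (b+c) ::ₘ A))/(n:ℝ)^2 := by
    have hiff : (q = τ) ↔ (q.parts = (b+c) ::ₘ A) :=
      ⟨fun h => by rw [h, hτ], fun h => partition_eq (by rw [hτ]; exact h)⟩
    unfold ind
    by_cases h : q = τ
    · rw [if_pos h, if_pos (hiff.mp h), mul_one]
      field_simp
    · rw [if_neg h, if_neg (fun hh => h (hiff.mpr hh)), mul_zero, zero_div]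
  have hK : smKernel n τ q =
      ( (n:ℝ) * ind (q.parts = (b+c) ::ₘ A)
      + ((∑ r ∈ Finset.Ico 1 (b+c), ((b+c : ℕ) : ℝ) * ind (q.parts = r ::ₘ (b+c-r) ::ₘ A))
        + (A.map (fun (a : ℕ) => ∑ r ∈ Finset.Ico 1 a,
            (a:ℝ) * ind (q.parts = (b+c) ::ₘ r ::ₘ (a-r) ::ₘ A.erase a))).sum)
      + (((A.map (fun (d:ℕ) => ((b+c : ℕ):ℝ)*(d:ℝ) * ind (q.parts = (b+c+d) ::ₘ A.erase d))).sum)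
        + (A.map (fun (a:ℕ) =>
            (a:ℝ)*((b+c : ℕ):ℝ) * ind (q.parts = (b+c+a) ::ₘ A.erase a)
            + ((A.erase a).map (fun (d:ℕ) =>
                (a:ℝ)*(d:ℝ) * ind (q.parts = (b+c) ::ₘ (a+d) ::ₘ (A.erase a).erase d))).sum)).sum)
      ) / (n:ℝ)^2 := by
    unfold smKernel
    rw [hτ]
    rw [hid]
    simp only [Multiset.map_cons, Multiset.sum_cons, Multiset.erase_cons_head]
    rw [show Multiset.map (fun a => ∑ r ∈ Finset.Ico 1 a,
        if q.parts = r ::ₘ (a - r) ::ₘ ((b+c) ::ₘ A).erase a then (a:ℝ) / (n:ℝ) ^ 2 else 0) A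
      = Multiset.map (fun a => ∑ r ∈ Finset.Ico 1 a,
        if q.parts = (b+c) ::ₘ r ::ₘ (a - r) ::ₘ A.erase a then (a:ℝ) / (n:ℝ) ^ 2 else 0) A from
      Multiset.map_congr rfl (fun a ha => Finset.sum_congr rfl (fun r _ => by
        rw [erase_cons_of_mem (b+c) ha, ← triple_perm (b+c) r (a-r) (A.erase a)]))]
    rw [show Multiset.map (fun d => if q.parts = (b + c + d) ::ₘ A.erase d
          then ((b+c : ℕ):ℝ) * (d:ℝ) / (n:ℝ) ^ 2 else 0) A
      = Multiset.map (fun (d : ℕ) => ((b+c : ℕ):ℝ)*(d:ℝ) * ind (q.parts = (b+c+d) ::ₘ A.erase d)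
          / (n:ℝ)^2) A from
      Multiset.map_congr rfl (fun d hd => by
        rw [ite_eq_mul_ind, div_mul_eq_mul_div])]
    rw [show Multiset.map (fun a => (Multiset.map (fun d =>
          if q.parts = (a + d) ::ₘ (((b+c) ::ₘ A).erase a).erase d
          then (a:ℝ) * (d:ℝ) / (n:ℝ) ^ 2 else 0) (((b+c) ::ₘ A).erase a)).sum) A
      = Multiset.map (fun (a : ℕ) =>
          ((a:ℝ)*((b+c : ℕ):ℝ) * ind (q.parts = (b+c+a) ::ₘ A.erase a)
          + ((A.erase a).map (fun (d:ℕ) =>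
              (a:ℝ)*(d:ℝ) * ind (q.parts = (b+c) ::ₘ (a+d) ::ₘ (A.erase a).erase d))).sum)
          / (n:ℝ)^2) A from
      Multiset.map_congr rfl (fun a ha => by
        rw [erase_cons_of_mem (b+c) ha, Multiset.map_cons, Multiset.sum_cons,
          Multiset.erase_cons_head, Nat.add_comm a (b+c)]
        rw [show Multiset.map (fun d => if q.parts = (a + d) ::ₘ ((b+c) ::ₘ A.erase a).erase d
              then (a:ℝ) * (d:ℝ) / (n:ℝ) ^ 2 else 0) (A.erase a)
          = Multiset.map (fun d => if q.parts = (b+c) ::ₘ (a+d) ::ₘ (A.erase a).erase d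
              then (a:ℝ) * (d:ℝ) / (n:ℝ) ^ 2 else 0) (A.erase a) from
          Multiset.map_congr rfl (fun d hd => by
            rw [erase_cons_of_mem (b+c) hd, Multiset.cons_swap])]
        simp only [ite_eq_mul_ind, div_mul_eq_mul_div, ← Finset.sum_div, sum_map_div,
          ← add_div])]
    simp only [ite_eq_mul_ind, div_mul_eq_mul_div, ← Finset.sum_div, sum_map_div,
      ← add_div]
  rw [hL, hK]
  congr 1
  -- decompose the big split sum over `Ico 1 (b+c)`
  have hsplit : (∑ r ∈ Finset.Ico 1 (b+c), ((b+c : ℕ) : ℝ) * ind (q.parts = r ::ₘ (b+c-r) ::ₘ A))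
      = (∑ r ∈ Finset.Ico 1 b, ((b+c : ℕ) : ℝ) * ind (q.parts = r ::ₘ (b+c-r) ::ₘ A))
      + (((b+c : ℕ) : ℝ) * ind (q.parts = b ::ₘ c ::ₘ A)
      + (∑ r ∈ Finset.Ico (b+1) (b+c), ((b+c : ℕ) : ℝ) * ind (q.parts = r ::ₘ (b+c-r) ::ₘ A))) := by
    rw [← Finset.sum_Ico_consecutive _ (show 1 ≤ b by omega) (show b ≤ b+c by omega)]
    congr 1
    rw [Finset.sum_eq_sum_Ico_succ_bot (show b < b+c by omega)]
    rw [Nat.add_sub_cancel_left]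
  rw [hsplit]
  -- reindex the T5 column sum
  have ht5 : (∑ r ∈ Finset.Ico 1 c, (c : ℝ) * ind (q.parts = (b+r) ::ₘ (c-r) ::ₘ A))
      = (∑ r ∈ Finset.Ico (b+1) (b+c), (c : ℝ) * ind (q.parts = r ::ₘ (b+c-r) ::ₘ A)) := by
    have h1 : ∀ r ∈ Finset.Ico 1 c, (c : ℝ) * ind (q.parts = (b+r) ::ₘ (c-r) ::ₘ A)
        = (c : ℝ) * ind (q.parts = (b+r) ::ₘ (b+c-(b+r)) ::ₘ A) := by
      intro r hr
      rw [Finset.mem_Ico] at hr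
      rw [show b+c-(b+r) = c - r by omega]
    rw [Finset.sum_congr rfl h1]
    rw [Finset.sum_Ico_add (fun s => (c : ℝ) * ind (q.parts = s ::ₘ (b+c-s) ::ₘ A)) 1 c b]
    rw [show 1+b = b+1 by omega, show c+b = b+c by omega]
  rw [ht5]
  -- merge coefficient bookkeeping for sums over Ico
  have m1 : (∑ r ∈ Finset.Ico 1 b, ((b+c : ℕ) : ℝ) * ind (q.parts = r ::ₘ (b+c-r) ::ₘ A))
      = (∑ r ∈ Finset.Ico 1 b, (c : ℝ) * ind (q.parts = r ::ₘ (b+c-r) ::ₘ A))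
      + (∑ r ∈ Finset.Ico 1 b, (b : ℝ) * ind (q.parts = r ::ₘ (b+c-r) ::ₘ A)) := by
    rw [← Finset.sum_add_distrib]
    exact Finset.sum_congr rfl fun r hr => by push_cast; ring
  have m2 : (∑ r ∈ Finset.Ico (b+1) (b+c), ((b+c : ℕ) : ℝ) * ind (q.parts = r ::ₘ (b+c-r) ::ₘ A))
      = (∑ r ∈ Finset.Ico (b+1) (b+c), (b : ℝ) * ind (q.parts = r ::ₘ (b+c-r) ::ₘ A))
      + (∑ r ∈ Finset.Ico (b+1) (b+c), (c : ℝ) * ind (q.parts = r ::ₘ (b+c-r) ::ₘ A)) := by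
    rw [← Finset.sum_add_distrib]
    exact Finset.sum_congr rfl fun r hr => by push_cast; ring
  rw [m1, m2]
  -- merge coefficient bookkeeping for the merge maps
  have m3 : (A.map (fun (a : ℕ) => 2*((b:ℝ)*(a:ℝ)) * ind (q.parts = (b+c+a) ::ₘ A.erase a))).sum
      + (A.map (fun (a : ℕ) => 2*((c:ℝ)*(a:ℝ)) * ind (q.parts = (b+c+a) ::ₘ A.erase a))).sum
      = (A.map (fun (d:ℕ) => ((b+c : ℕ):ℝ)*(d:ℝ) * ind (q.parts = (b+c+d) ::ₘ A.erase d))).sum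
      + (A.map (fun (a:ℕ) => (a:ℝ)*((b+c : ℕ):ℝ) * ind (q.parts = (b+c+a) ::ₘ A.erase a))).sum := by
    rw [← Multiset.sum_map_add, ← Multiset.sum_map_add]
    exact congrArg Multiset.sum (Multiset.map_congr rfl (fun a ha => by push_cast; ring))
  rw [Multiset.sum_map_add]
  push_cast at m3 ⊢
  linear_combination m3

end Col

end SMAux

namespace SMAux

section Support

variable {n b c : ℕ} {A : Multiset ℕ}

lemma cpl_bounds (hb : 1 ≤ b) (hbc : b ≤ c) (hA : ∀ i ∈ A, 0 < i) (hs : b + c + A.sum = n)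
    (z : Nat.Partition n × Nat.Partition n) :
    0 ≤ cpl n b c A z
    ∧ (((b:ℝ)+(c:ℝ)) * pt n (b ::ₘ c ::ₘ A) (b ::ₘ c ::ₘ A) z
        + ((b:ℝ)+(c:ℝ)) * pt n ((b+c) ::ₘ A) ((b+c) ::ₘ A) z) / (n:ℝ)^2 ≤ cpl n b c A z
    ∧ ((A.map (fun (a : ℕ) => 2*((c:ℝ)*(a:ℝ)) *
        pt n ((c+a) ::ₘ b ::ₘ A.erase a) ((b+c+a) ::ₘ A.erase a) z)).sum) / (n:ℝ)^2
        ≤ cpl n b c A z := by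
  have hn2 : (0:ℝ) ≤ (n:ℝ)^2 := by positivity
  have h1 : 0 ≤ ((n : ℝ) - ((b:ℝ)+(c:ℝ))) * pt n (b ::ₘ c ::ₘ A) ((b+c) ::ₘ A) z := by
    apply mul_nonneg _ (pt_nonneg _ _ _)
    have : ((b:ℝ)+(c:ℝ)) ≤ (n:ℝ) := by
      have : ((b+c : ℕ) : ℝ) ≤ (n : ℝ) := Nat.cast_le.mpr (by omega)
      push_cast at this
      linarith
    linarith
  have h2 : 0 ≤ ((b:ℝ)+(c:ℝ)) * pt n (b ::ₘ c ::ₘ A) (b ::ₘ c ::ₘ A) z :=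
    mul_nonneg (by positivity) (pt_nonneg _ _ _)
  have h3 : 0 ≤ ((b:ℝ)+(c:ℝ)) * pt n ((b+c) ::ₘ A) ((b+c) ::ₘ A) z :=
    mul_nonneg (by positivity) (pt_nonneg _ _ _)
  have h4 : 0 ≤ ∑ r ∈ Finset.Ico 1 b, (c : ℝ) * pt n ((b+c) ::ₘ A) (r ::ₘ (b+c-r) ::ₘ A) z :=
    Finset.sum_nonneg fun r _ => mul_nonneg (by positivity) (pt_nonneg _ _ _)
  have h5 : 0 ≤ ∑ r ∈ Finset.Ico (b+1) (b+c),
      (b : ℝ) * pt n ((b+c) ::ₘ A) (r ::ₘ (b+c-r) ::ₘ A) z :=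
    Finset.sum_nonneg fun r _ => mul_nonneg (by positivity) (pt_nonneg _ _ _)
  have h6 : 0 ≤ ∑ r ∈ Finset.Ico 1 b,
      (b : ℝ) * pt n (r ::ₘ (b-r) ::ₘ c ::ₘ A) (r ::ₘ (b+c-r) ::ₘ A) z :=
    Finset.sum_nonneg fun r _ => mul_nonneg (by positivity) (pt_nonneg _ _ _)
  have h7 : 0 ≤ ∑ r ∈ Finset.Ico 1 c,
      (c : ℝ) * pt n (r ::ₘ (c-r) ::ₘ b ::ₘ A) ((b+r) ::ₘ (c-r) ::ₘ A) z :=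
    Finset.sum_nonneg fun r _ => mul_nonneg (by positivity) (pt_nonneg _ _ _)
  have h8 : 0 ≤ (A.map (fun (a : ℕ) => 2*((b:ℝ)*(a:ℝ)) *
      pt n ((b+a) ::ₘ c ::ₘ A.erase a) ((b+c+a) ::ₘ A.erase a) z)).sum := by
    apply Multiset.sum_nonneg
    intro x hx
    rw [Multiset.mem_map] at hx
    obtain ⟨a, _, rfl⟩ := hx
    exact mul_nonneg (by positivity) (pt_nonneg _ _ _)
  have h9 : 0 ≤ (A.map (fun (a : ℕ) => 2*((c:ℝ)*(a:ℝ)) *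
      pt n ((c+a) ::ₘ b ::ₘ A.erase a) ((b+c+a) ::ₘ A.erase a) z)).sum := by
    apply Multiset.sum_nonneg
    intro x hx
    rw [Multiset.mem_map] at hx
    obtain ⟨a, _, rfl⟩ := hx
    exact mul_nonneg (by positivity) (pt_nonneg _ _ _)
  have h10 : 0 ≤ (A.map (fun (a : ℕ) => ∑ r ∈ Finset.Ico 1 a,
      (a : ℝ) * pt n (b ::ₘ c ::ₘ r ::ₘ (a-r) ::ₘ A.erase a)
        ((b+c) ::ₘ r ::ₘ (a-r) ::ₘ A.erase a) z)).sum := by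
    apply Multiset.sum_nonneg
    intro x hx
    rw [Multiset.mem_map] at hx
    obtain ⟨a, _, rfl⟩ := hx
    exact Finset.sum_nonneg fun r _ => mul_nonneg (by positivity) (pt_nonneg _ _ _)
  have h11 : 0 ≤ (A.map (fun (a : ℕ) => ((A.erase a).map (fun (d : ℕ) =>
      (a:ℝ)*(d:ℝ) * pt n (b ::ₘ c ::ₘ (a+d) ::ₘ ((A.erase a).erase d))
        ((b+c) ::ₘ (a+d) ::ₘ ((A.erase a).erase d)) z)).sum)).sum := by
    apply Multiset.sum_nonneg
    intro x hx
    rw [Multiset.mem_map] at hx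
    obtain ⟨a, _, rfl⟩ := hx
    apply Multiset.sum_nonneg
    intro w hw
    rw [Multiset.mem_map] at hw
    obtain ⟨d, _, rfl⟩ := hw
    exact mul_nonneg (by positivity) (pt_nonneg _ _ _)
  refine ⟨?_, ?_, ?_⟩
  · simp only [cpl]
    apply div_nonneg _ hn2
    linarith
  · simp only [cpl]
    apply div_le_div_of_nonneg_right _ hn2
    linarith
  · simp only [cpl]
    apply div_le_div_of_nonneg_right _ hn2
    linarith

lemma cpl_support (hb : 1 ≤ b) (hbc : b ≤ c) (hA : ∀ i ∈ A, 0 < i) (hs : b + c + A.sum = n)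
    (z : Nat.Partition n × Nat.Partition n) (h : cpl n b c A z ≠ 0) :
    rho n z.1 z.2 ≤ 1 := by
  have hc : 1 ≤ c := le_trans hb hbc
  by_contra hr
  apply h
  have key : ∀ (M N : Multiset ℕ),
      (∀ p q : Nat.Partition n, p.parts = M → q.parts = N → rho n p q ≤ 1) →
      pt n M N z = 0 := by
    intro M N hadj
    by_contra hne
    obtain ⟨h1, h2⟩ := pt_ne_zero hne
    exact hr (hadj z.1 z.2 h1 h2)
  have self_le : ∀ (M : Multiset ℕ) (p q : Nat.Partition n),
      p.parts = M → q.parts = M → rho n p q ≤ 1 := by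
    intro M p q hp hq
    have : p = q := partition_eq (by rw [hp, hq])
    rw [this]
    exact rho_self q
  simp only [cpl]
  rw [key _ _ (fun p q hp hq => rho_le_one_of_adj (adj_merge hb hc hp hq))]
  rw [key _ _ (self_le _)]
  rw [key _ _ (self_le _)]
  have z4 : (∑ r ∈ Finset.Ico 1 b, (c : ℝ) * pt n ((b+c) ::ₘ A) (r ::ₘ (b+c-r) ::ₘ A) z) = 0 := by
    apply Finset.sum_eq_zero
    intro r hrm
    rw [Finset.mem_Ico] at hrm
    rw [key _ _ (fun p q hp hq => rho_le_one_of_adj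
      ((adj_merge (b := r) (c := b+c-r) hrm.1 (by omega) hq
        (by rw [hp]; congr 1; omega)).symm)), mul_zero]
  have z5 : (∑ r ∈ Finset.Ico (b+1) (b+c), (b : ℝ) * pt n ((b+c) ::ₘ A) (r ::ₘ (b+c-r) ::ₘ A) z) = 0 := by
    apply Finset.sum_eq_zero
    intro r hrm
    rw [Finset.mem_Ico] at hrm
    rw [key _ _ (fun p q hp hq => rho_le_one_of_adj
      ((adj_merge (b := r) (c := b+c-r) (by omega) (by omega) hq
        (by rw [hp]; congr 1; omega)).symm)), mul_zero]
  have z6 : (∑ r ∈ Finset.Ico 1 b, (b : ℝ) * pt n (r ::ₘ (b-r) ::ₘ c ::ₘ A) (r ::ₘ (b+c-r) ::ₘ A) z) = 0 := by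
    apply Finset.sum_eq_zero
    intro r hrm
    rw [Finset.mem_Ico] at hrm
    rw [key _ _ (fun p q hp hq => rho_le_one_of_adj
      (adj_merge (b := b - r) (c := c) (A' := r ::ₘ A) (by omega) hc
        (by rw [hp]; exact triple_perm r (b-r) c A)
        (by rw [show (b-r)+c = b+c-r by omega, hq]; exact Multiset.cons_swap _ _ _))), mul_zero]
  have z7 : (∑ r ∈ Finset.Ico 1 c, (c : ℝ) * pt n (r ::ₘ (c-r) ::ₘ b ::ₘ A) ((b+r) ::ₘ (c-r) ::ₘ A) z) = 0 := by
    apply Finset.sum_eq_zero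
    intro r hrm
    rw [Finset.mem_Ico] at hrm
    rw [key _ _ (fun p q hp hq => rho_le_one_of_adj
      (adj_merge (b := r) (c := b) (A' := (c-r) ::ₘ A) hrm.1 hb
        (by rw [hp, Multiset.cons_swap (c-r) b])
        (by rw [show r+b = b+r from Nat.add_comm r b]; exact hq))), mul_zero]
  have z8 : (A.map (fun (a : ℕ) => 2*((b:ℝ)*(a:ℝ)) *
      pt n ((b+a) ::ₘ c ::ₘ A.erase a) ((b+c+a) ::ₘ A.erase a) z)).sum = 0 := by
    apply Multiset.sum_eq_zero
    intro x hx
    rw [Multiset.mem_map] at hx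
    obtain ⟨a, ha, rfl⟩ := hx
    have hap := hA a ha
    rw [key _ _ (fun p q hp hq => rho_le_one_of_adj
      (adj_merge (b := c) (c := b+a) (A' := A.erase a) hc (by omega)
        (by rw [hp, Multiset.cons_swap])
        (by rw [show c+(b+a) = b+c+a by omega]; exact hq))), mul_zero]
  have z9 : (A.map (fun (a : ℕ) => 2*((c:ℝ)*(a:ℝ)) *
      pt n ((c+a) ::ₘ b ::ₘ A.erase a) ((b+c+a) ::ₘ A.erase a) z)).sum = 0 := by
    apply Multiset.sum_eq_zero
    intro x hx
    rw [Multiset.mem_map] at hx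
    obtain ⟨a, ha, rfl⟩ := hx
    have hap := hA a ha
    rw [key _ _ (fun p q hp hq => rho_le_one_of_adj
      (adj_merge (b := b) (c := c+a) (A' := A.erase a) hb (by omega)
        (by rw [hp, Multiset.cons_swap])
        (by rw [show b+(c+a) = b+c+a by omega]; exact hq))), mul_zero]
  have z10 : (A.map (fun (a : ℕ) => ∑ r ∈ Finset.Ico 1 a,
      (a : ℝ) * pt n (b ::ₘ c ::ₘ r ::ₘ (a-r) ::ₘ A.erase a)
        ((b+c) ::ₘ r ::ₘ (a-r) ::ₘ A.erase a) z)).sum = 0 := by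
    apply Multiset.sum_eq_zero
    intro x hx
    rw [Multiset.mem_map] at hx
    obtain ⟨a, ha, rfl⟩ := hx
    apply Finset.sum_eq_zero
    intro r hrm
    rw [key _ _ (fun p q hp hq => rho_le_one_of_adj (adj_merge hb hc hp hq)), mul_zero]
  have z11 : (A.map (fun (a : ℕ) => ((A.erase a).map (fun (d : ℕ) =>
      (a:ℝ)*(d:ℝ) * pt n (b ::ₘ c ::ₘ (a+d) ::ₘ ((A.erase a).erase d))
        ((b+c) ::ₘ (a+d) ::ₘ ((A.erase a).erase d)) z)).sum)).sum = 0 := by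
    apply Multiset.sum_eq_zero
    intro x hx
    rw [Multiset.mem_map] at hx
    obtain ⟨a, ha, rfl⟩ := hx
    apply Multiset.sum_eq_zero
    intro w hw
    rw [Multiset.mem_map] at hw
    obtain ⟨d, hd, rfl⟩ := hw
    rw [key _ _ (fun p q hp hq => rho_le_one_of_adj (adj_merge hb hc hp hq)), mul_zero]
  rw [z4, z5, z6, z7, z8, z9, z10, z11]
  simp

end Support

end SMAux

namespace SMAux

section DiagGrowth

variable {n b c : ℕ} {A : Multiset ℕ}

lemma cpl_diag (hb : 1 ≤ b) (hbc : b ≤ c) (hA : ∀ i ∈ A, 0 < i) (hs : b + c + A.sum = n) :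
    4*(b:ℝ)/(n:ℝ)^2 ≤ ∑ p : Nat.Partition n, cpl n b c A (p, p) := by
  have hn2 : (0:ℝ) ≤ (n:ℝ)^2 := by positivity
  have step : ∑ p : Nat.Partition n,
      (((b:ℝ)+(c:ℝ)) * pt n (b ::ₘ c ::ₘ A) (b ::ₘ c ::ₘ A) (p, p)
        + ((b:ℝ)+(c:ℝ)) * pt n ((b+c) ::ₘ A) ((b+c) ::ₘ A) (p, p)) / (n:ℝ)^2
      ≤ ∑ p : Nat.Partition n, cpl n b c A (p, p) :=
    Finset.sum_le_sum (fun p _ => (cpl_bounds hb hbc hA hs (p, p)).2.1)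
  have comp : ∑ p : Nat.Partition n,
      (((b:ℝ)+(c:ℝ)) * pt n (b ::ₘ c ::ₘ A) (b ::ₘ c ::ₘ A) (p, p)
        + ((b:ℝ)+(c:ℝ)) * pt n ((b+c) ::ₘ A) ((b+c) ::ₘ A) (p, p)) / (n:ℝ)^2
      = (((b:ℝ)+(c:ℝ)) + ((b:ℝ)+(c:ℝ))) / (n:ℝ)^2 := by
    rw [← Finset.sum_div]
    congr 1
    rw [Finset.sum_add_distrib, ← Finset.mul_sum, ← Finset.mul_sum,
      pt_diag (g_sigma hb hbc hA hs), pt_diag (g_tau hb hbc hA hs)]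
    ring
  rw [comp] at step
  refine le_trans ?_ step
  apply div_le_div_of_nonneg_right ?_ hn2
  have : (b:ℝ) ≤ (c:ℝ) := Nat.cast_le.mpr hbc
  linarith

lemma sPart_st (hb : 1 ≤ b) (hbc : b ≤ c) {σ τ : Nat.Partition n}
    (hσ : σ.parts = b ::ₘ c ::ₘ A) (hτ : τ.parts = (b+c) ::ₘ A) :
    sPart n σ τ = b :=
  (sPart_mPart_eq hσ hτ hbc (by omega)).1

lemma mPart_st (hb : 1 ≤ b) (hbc : b ≤ c) {σ τ : Nat.Partition n}
    (hσ : σ.parts = b ::ₘ c ::ₘ A) (hτ : τ.parts = (b+c) ::ₘ A) :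
    mPart n σ τ = c :=
  (sPart_mPart_eq hσ hτ hbc (by omega)).2

lemma vsum_split {σ : Nat.Partition n} (hσ : σ.parts = b ::ₘ c ::ₘ A) (y : ℝ) :
    Vsum σ y ≤ (((Multiset.filter (fun a : ℕ => y ≤ (a:ℝ)) A).sum : ℕ) : ℝ) + (b:ℝ) + (c:ℝ) := by
  unfold Vsum
  rw [hσ, Multiset.filter_cons, Multiset.filter_cons]
  have hle : ((if y ≤ ((b:ℕ):ℝ) then ({b} : Multiset ℕ) else 0)
      + ((if y ≤ ((c:ℕ):ℝ) then ({c} : Multiset ℕ) else 0)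
      + Multiset.filter (fun a : ℕ => y ≤ (a:ℝ)) A)).sum
      ≤ (Multiset.filter (fun a : ℕ => y ≤ (a:ℝ)) A).sum + b + c := by
    rw [Multiset.sum_add, Multiset.sum_add]
    split <;> split <;> simp <;> omega
  calc ((((if y ≤ ((b:ℕ):ℝ) then ({b} : Multiset ℕ) else 0)
      + ((if y ≤ ((c:ℕ):ℝ) then ({c} : Multiset ℕ) else 0)
      + Multiset.filter (fun a : ℕ => y ≤ (a:ℝ)) A)).sum : ℕ) : ℝ)
      ≤ (((Multiset.filter (fun a : ℕ => y ≤ (a:ℝ)) A).sum + b + c : ℕ) : ℝ) := Nat.cast_le.mpr hle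
    _ = (((Multiset.filter (fun a : ℕ => y ≤ (a:ℝ)) A).sum : ℕ) : ℝ) + (b:ℝ) + (c:ℝ) := by
        push_cast; ring

lemma vsum_merged {σ : Nat.Partition n} (hσ : σ.parts = (b+c) ::ₘ A) (y : ℝ) :
    Vsum σ y ≤ (((Multiset.filter (fun a : ℕ => y ≤ (a:ℝ)) A).sum : ℕ) : ℝ) + (b:ℝ) + (c:ℝ) := by
  unfold Vsum
  rw [hσ, Multiset.filter_cons]
  have hle : ((if y ≤ (((b+c):ℕ):ℝ) then ({b+c} : Multiset ℕ) else 0)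
      + Multiset.filter (fun a : ℕ => y ≤ (a:ℝ)) A).sum
      ≤ (Multiset.filter (fun a : ℕ => y ≤ (a:ℝ)) A).sum + (b + c) := by
    rw [Multiset.sum_add]
    split <;> simp <;> omega
  calc (((if y ≤ (((b+c):ℕ):ℝ) then ({b+c} : Multiset ℕ) else 0)
      + Multiset.filter (fun a : ℕ => y ≤ (a:ℝ)) A).sum : ℝ)
      ≤ (((Multiset.filter (fun a : ℕ => y ≤ (a:ℝ)) A).sum + (b + c) : ℕ) : ℝ) := Nat.cast_le.mpr hle
    _ = (((Multiset.filter (fun a : ℕ => y ≤ (a:ℝ)) A).sum : ℕ) : ℝ) + (b:ℝ) + (c:ℝ) := by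
        push_cast; ring

lemma map_ite_filter_sum (A : Multiset ℕ) (P : ℕ → Prop) [DecidablePred P] (k : ℝ) :
    (A.map (fun a => if P a then k * (a:ℝ) else 0)).sum
      = k * (((Multiset.filter P A).sum : ℕ) : ℝ) := by
  induction A using Multiset.induction_on with
  | empty => simp
  | cons a s ih =>
      rw [Multiset.map_cons, Multiset.sum_cons, ih, Multiset.filter_cons]
      by_cases h : P a
      · rw [if_pos h, if_pos h, Multiset.sum_add, Multiset.sum_singleton]
        push_cast
        ring
      · rw [if_neg h, if_neg h]
        simp

set_option maxHeartbeats 1000000 in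
lemma cpl_growth (hb : 1 ≤ b) (hbc : b ≤ c) (hA : ∀ i ∈ A, 0 < i) (hs : b + c + A.sum = n)
    (x y R : ℝ) (hx : 0 < x) (hxc : x ≤ (c:ℝ))
    (hR : R ≤ (((Multiset.filter (fun a : ℕ => y ≤ (a:ℝ)) A).sum : ℕ) : ℝ) + (b:ℝ) + (c:ℝ)) :
    2 * (c:ℝ) * (R - 2 * (c:ℝ)) / (n : ℝ) ^ 2 ≤
      ∑ z : Nat.Partition n × Nat.Partition n,
        if x + y ≤ mPart n z.1 z.2 then cpl n b c A z else 0 := by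
  have hc : 1 ≤ c := le_trans hb hbc
  have hn2 : (0:ℝ) ≤ (n:ℝ)^2 := by positivity
  set W : ℝ := (((Multiset.filter (fun a : ℕ => y ≤ (a:ℝ)) A).sum : ℕ) : ℝ) with hW
  have hW0 : 0 ≤ W := by positivity
  -- step 1: pointwise lower bound by the T7 block
  have step1 : ∑ z : Nat.Partition n × Nat.Partition n,
      (if x + y ≤ mPart n z.1 z.2 then
        ((A.map (fun (a : ℕ) => 2*((c:ℝ)*(a:ℝ)) *
          pt n ((c+a) ::ₘ b ::ₘ A.erase a) ((b+c+a) ::ₘ A.erase a) z)).sum) / (n:ℝ)^2 else 0)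
      ≤ ∑ z : Nat.Partition n × Nat.Partition n,
        if x + y ≤ mPart n z.1 z.2 then cpl n b c A z else 0 := by
    apply Finset.sum_le_sum
    intro z _
    by_cases h : x + y ≤ mPart n z.1 z.2
    · rw [if_pos h, if_pos h]
      exact (cpl_bounds hb hbc hA hs z).2.2
    · rw [if_neg h, if_neg h]
  refine le_trans ?_ step1
  -- step 2: compute the lower bound sum
  have pull : ∀ z : Nat.Partition n × Nat.Partition n,
      (if x + y ≤ mPart n z.1 z.2 then
        ((A.map (fun (a : ℕ) => 2*((c:ℝ)*(a:ℝ)) *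
          pt n ((c+a) ::ₘ b ::ₘ A.erase a) ((b+c+a) ::ₘ A.erase a) z)).sum) / (n:ℝ)^2 else 0)
      = ((A.map (fun (a : ℕ) => if x + y ≤ mPart n z.1 z.2 then 2*((c:ℝ)*(a:ℝ)) *
          pt n ((c+a) ::ₘ b ::ₘ A.erase a) ((b+c+a) ::ₘ A.erase a) z else 0)).sum) / (n:ℝ)^2 := by
    intro z
    by_cases h : x + y ≤ mPart n z.1 z.2
    · simp only [if_pos h]
    · simp only [if_neg h]
      simp
  simp only [pull]
  rw [← Finset.sum_div]
  rw [sum_map_swap (f := fun (a : ℕ) (z : Nat.Partition n × Nat.Partition n) =>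
    if x + y ≤ mPart n z.1 z.2 then 2*((c:ℝ)*(a:ℝ)) *
      pt n ((c+a) ::ₘ b ::ₘ A.erase a) ((b+c+a) ::ₘ A.erase a) z else 0)]
  -- step 3: per-part lower bound
  have per : ∀ a ∈ A,
      (if y ≤ (a:ℝ) then 2*((c:ℝ)*(a:ℝ)) else 0) ≤
      ∑ z : Nat.Partition n × Nat.Partition n,
        if x + y ≤ mPart n z.1 z.2 then 2*((c:ℝ)*(a:ℝ)) *
          pt n ((c+a) ::ₘ b ::ₘ A.erase a) ((b+c+a) ::ₘ A.erase a) z else 0 := by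
    intro a ha
    have hnn : ∀ z : Nat.Partition n × Nat.Partition n, 0 ≤
        (if x + y ≤ mPart n z.1 z.2 then 2*((c:ℝ)*(a:ℝ)) *
          pt n ((c+a) ::ₘ b ::ₘ A.erase a) ((b+c+a) ::ₘ A.erase a) z else 0) := by
      intro z
      split
      · exact mul_nonneg (by positivity) (pt_nonneg _ _ _)
      · exact le_rfl
    by_cases hy : y ≤ (a:ℝ)
    · obtain ⟨P, hP⟩ := (g_T7X hb hbc hA hs ha).exists
      obtain ⟨Q, hQ⟩ := (g_mrg hb hbc hA hs ha).exists
      have hmp : mPart n P Q = ((c+a : ℕ) : ℝ) := by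
        have hap := hA a ha
        exact (sPart_mPart_eq (u := b) (v := c+a) (w := b+c+a)
          (by rw [hP]; exact Multiset.cons_swap _ _ _) (by rw [hQ]) (by omega) (by omega)).2
      have hev : x + y ≤ mPart n P Q := by
        rw [hmp]
        push_cast
        linarith
      rw [if_pos hy]
      have hterm : (if x + y ≤ mPart n (P, Q).1 (P, Q).2 then 2*((c:ℝ)*(a:ℝ)) *
          pt n ((c+a) ::ₘ b ::ₘ A.erase a) ((b+c+a) ::ₘ A.erase a) (P, Q) else 0)
          = 2*((c:ℝ)*(a:ℝ)) := by
        rw [if_pos hev]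
        unfold pt
        rw [if_pos ⟨hP, hQ⟩, mul_one]
      calc 2*((c:ℝ)*(a:ℝ)) = _ := hterm.symm
        _ ≤ _ := Finset.single_le_sum (fun z _ => hnn z) (Finset.mem_univ (P, Q))
    · rw [if_neg hy]
      exact Finset.sum_nonneg fun z _ => hnn z
  have step3 : (A.map (fun (a:ℕ) => if y ≤ (a:ℝ) then 2*((c:ℝ)*(a:ℝ)) else 0)).sum ≤
      (A.map (fun (a:ℕ) => ∑ z : Nat.Partition n × Nat.Partition n,
        if x + y ≤ mPart n z.1 z.2 then 2*((c:ℝ)*(a:ℝ)) *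
          pt n ((c+a) ::ₘ b ::ₘ A.erase a) ((b+c+a) ::ₘ A.erase a) z else 0)).sum :=
    Multiset.sum_map_le_sum_map _ _ per
  have comp : (A.map (fun (a:ℕ) => if y ≤ (a:ℝ) then 2*((c:ℝ)*(a:ℝ)) else 0)).sum
      = 2*(c:ℝ) * W := by
    rw [show (fun (a:ℕ) => if y ≤ (a:ℝ) then 2*((c:ℝ)*(a:ℝ)) else 0)
      = (fun (a:ℕ) => if y ≤ (a:ℝ) then (2*(c:ℝ)) * (a:ℝ) else 0) from by
        funext a; rw [mul_assoc]]
    exact map_ite_filter_sum A _ _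
  apply div_le_div_of_nonneg_right ?_ hn2
  refine le_trans ?_ step3
  rw [comp]
  have : R - 2*(c:ℝ) ≤ W := by
    have hbc' : (b:ℝ) ≤ (c:ℝ) := Nat.cast_le.mpr hbc
    linarith
  nlinarith [hW0, show (0:ℝ) ≤ 2*(c:ℝ) by positivity]

end DiagGrowth

end SMAux

namespace SMAux

lemma rho_comm {n : ℕ} (p q : Nat.Partition n) : rho n p q = rho n q p := by
  unfold rho; exact SimpleGraph.dist_comm

section Main

variable {n b c : ℕ} {A : Multiset ℕ}

lemma main_lemma (hb : 1 ≤ b) (hbc : b ≤ c) (hA : ∀ i ∈ A, 0 < i) (hs : b + c + A.sum = n)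
    (σ τ : Nat.Partition n) (hσ : σ.parts = b ::ₘ c ::ₘ A) (hτ : τ.parts = (b+c) ::ₘ A) :
    IsOneStepCoupling n σ τ (cpl n b c A) ∧
    (∀ p q, cpl n b c A (p,q) ≠ 0 → rho n p q ≤ 1) ∧
    (4 * sPart n σ τ / (n:ℝ)^2 ≤ ∑ p : Nat.Partition n, cpl n b c A (p,p)) ∧
    ∀ x y R : ℝ, 0 < x → x ≤ mPart n σ τ →
      (R ≤ (((Multiset.filter (fun a : ℕ => y ≤ (a:ℝ)) A).sum : ℕ) : ℝ) + (b:ℝ) + (c:ℝ)) →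
      2 * mPart n σ τ * (R - 2 * mPart n σ τ)/(n:ℝ)^2 ≤
        ∑ z : Nat.Partition n × Nat.Partition n,
          if x + y ≤ mPart n z.1 z.2 then cpl n b c A z else 0 := by
  refine ⟨⟨fun z => (cpl_bounds hb hbc hA hs z).1,
    fun p => cpl_row hb hbc hA hs σ hσ p,
    fun q => cpl_col hb hbc hA hs τ hτ q⟩,
    fun p q hne => cpl_support hb hbc hA hs (p, q) hne, ?_, ?_⟩
  · rw [sPart_st hb hbc hσ hτ]
    exact cpl_diag hb hbc hA hs
  · rw [mPart_st hb hbc hσ hτ]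
    intro x y R hx hxc hR
    exact cpl_growth hb hbc hA hs x y R hx hxc hR

end Main

end SMAux

/-- One-step coupling with control on the growth of `m`:
`ℙ(m(X₁,Y₁) ≥ x + y) ≥ 2c(R − 2c)/n²` whenever `0 < x ≤ c` and `|V(σ,y)| ≥ R`. -/
theorem m_growth_coupling (n : ℕ) (hn : 1 ≤ n) (σ τ : Nat.Partition n)
    (h : rho n σ τ = 1) :
    ∃ μ : Nat.Partition n × Nat.Partition n → ℝ,
      IsOneStepCoupling n σ τ μ ∧
      (∀ p q, μ (p, q) ≠ 0 → rho n p q ≤ 1) ∧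
      4 * sPart n σ τ / (n : ℝ) ^ 2 ≤ (∑ p, μ (p, p)) ∧
      ∀ x y R : ℝ, 0 < x → x ≤ mPart n σ τ → R ≤ Vsum σ y →
        2 * mPart n σ τ * (R - 2 * mPart n σ τ) / (n : ℝ) ^ 2 ≤
          ∑ z : Nat.Partition n × Nat.Partition n,
            if x + y ≤ mPart n z.1 z.2 then μ z else 0 := by
  classical
  open SMAux in
  obtain ⟨hne, hsp | hsp⟩ := (show σ ≠ τ ∧ (IsSplitOf n σ τ ∨ IsSplitOf n τ σ) from SMAux.adj_of_rho_eq_one h)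
  · -- σ is the split of τ
    obtain ⟨a, ha, r, hr1, hr2, hps⟩ := hsp
    set A : Multiset ℕ := τ.parts.erase a with hA_def
    set b : ℕ := min r (a - r) with hb_def
    set c : ℕ := max r (a - r) with hc_def
    have hb : 1 ≤ b := by omega
    have hbc : b ≤ c := by omega
    have habc : b + c = a := by omega
    have hσ' : σ.parts = b ::ₘ c ::ₘ A := by
      rcases le_total r (a - r) with hle | hle
      · rw [hb_def, hc_def, min_eq_left hle, max_eq_right hle]
        exact hps
      · rw [hb_def, hc_def, min_eq_right hle, max_eq_left hle, hps]
        exact Multiset.cons_swap _ _ _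
    have hτ' : τ.parts = (b + c) ::ₘ A := by
      rw [habc]
      exact (Multiset.cons_erase ha).symm
    have hA' : ∀ i ∈ A, 0 < i := fun i hi => τ.parts_pos (Multiset.mem_of_mem_erase hi)
    have hs' : b + c + A.sum = n := by
      have h1 : a + A.sum = τ.parts.sum := by
        conv_rhs => rw [← Multiset.cons_erase ha]
        rw [Multiset.sum_cons]
      have h2 : τ.parts.sum = n := τ.parts_sum
      omega
    obtain ⟨h1, h2, h3, h4⟩ := SMAux.main_lemma hb hbc hA' hs' σ τ hσ' hτ'
    refine ⟨SMAux.cpl n b c A, h1, h2, h3, fun x y R hx hxc hR => h4 x y R hx hxc ?_⟩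
    have hv := SMAux.vsum_split hσ' y
    linarith
  · -- τ is the split of σ
    obtain ⟨a, ha, r, hr1, hr2, hps⟩ := hsp
    set A : Multiset ℕ := σ.parts.erase a with hA_def
    set b : ℕ := min r (a - r) with hb_def
    set c : ℕ := max r (a - r) with hc_def
    have hb : 1 ≤ b := by omega
    have hbc : b ≤ c := by omega
    have habc : b + c = a := by omega
    have hτ' : τ.parts = b ::ₘ c ::ₘ A := by
      rcases le_total r (a - r) with hle | hle
      · rw [hb_def, hc_def, min_eq_left hle, max_eq_right hle]
        exact hps
      · rw [hb_def, hc_def, min_eq_right hle, max_eq_left hle, hps]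
        exact Multiset.cons_swap _ _ _
    have hσ' : σ.parts = (b + c) ::ₘ A := by
      rw [habc]
      exact (Multiset.cons_erase ha).symm
    have hA' : ∀ i ∈ A, 0 < i := fun i hi => σ.parts_pos (Multiset.mem_of_mem_erase hi)
    have hs' : b + c + A.sum = n := by
      have h1 : a + A.sum = σ.parts.sum := by
        conv_rhs => rw [← Multiset.cons_erase ha]
        rw [Multiset.sum_cons]
      have h2 : σ.parts.sum = n := σ.parts_sum
      omega
    obtain ⟨h1, h2, h3, h4⟩ := SMAux.main_lemma hb hbc hA' hs' τ σ hτ' hσ'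
    refine ⟨fun z => SMAux.cpl n b c A (z.2, z.1), ⟨?_, ?_, ?_⟩, ?_, ?_, ?_⟩
    · exact fun z => (SMAux.cpl_bounds hb hbc hA' hs' (z.2, z.1)).1
    · intro p
      calc (∑ q : Nat.Partition n, SMAux.cpl n b c A ((p, q).2, (p, q).1))
          = ∑ q : Nat.Partition n, SMAux.cpl n b c A (q, p) :=
            Finset.sum_congr rfl (fun q _ => rfl)
        _ = smKernel n σ p := SMAux.cpl_col hb hbc hA' hs' σ hσ' p
    · intro q
      calc (∑ p : Nat.Partition n, SMAux.cpl n b c A ((p, q).2, (p, q).1))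
          = ∑ p : Nat.Partition n, SMAux.cpl n b c A (q, p) :=
            Finset.sum_congr rfl (fun p _ => rfl)
        _ = smKernel n τ q := SMAux.cpl_row hb hbc hA' hs' τ hτ' q
    · intro p q hne
      rw [SMAux.rho_comm]
      exact SMAux.cpl_support hb hbc hA' hs' (q, p) hne
    · rw [SMAux.sPart_comm]
      exact le_trans h3 (le_of_eq (Finset.sum_congr rfl (fun p _ => rfl)))
    · intro x y R hx hxc hR
      rw [SMAux.mPart_comm]
      have hswap : (∑ z : Nat.Partition n × Nat.Partition n,
            if x + y ≤ mPart n z.1 z.2 then SMAux.cpl n b c A (z.2, z.1) else 0)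
          = ∑ z : Nat.Partition n × Nat.Partition n,
            if x + y ≤ mPart n z.1 z.2 then SMAux.cpl n b c A z else 0 := by
        apply Fintype.sum_equiv (Equiv.prodComm _ _)
        intro z
        rw [SMAux.mPart_comm z.1 z.2]
        rfl
      rw [hswap]
      apply h4 x y R hx (by rwa [SMAux.mPart_comm] at hxc)
      have hv := SMAux.vsum_merged hσ' y
      linarith

end
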